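/- arXiv:1110.1044 — 4 statements merged into one kernel-verified Lean document; each statement's English description precedes it below -/
import Mathlib

section
/- Let k_1, k_2 ∈ ℕ and, for 1 ≤ j ≤ k_1 − 1, let X_j and X_{j+1} be the numbers of draws until the j-th and (j+1)-th successes respectively in one run of repeated random sampling without replacement from a population of size k_1 + k_2 with k_1 successes. Then the conditional law of X_{j+1} − X_j given X_j = k is stochastically smaller than a geometric distribution with parameter k_1/(k_1+k_2) − j/(k_1+k_2): for every m and every admissible k, P(X_{j+1} − X_j ≥ m | X_j = k) ≤ P(Geo((k_1 − j)/(k_1+k_2)) ≥ m). -/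
open MeasureTheory ProbabilityTheory Finset
open scoped ENNReal

namespace RumorSpreading

/-- `X` has the geometric distribution on `{1,2,...}` with parameter `p`:
`P(X = k) = p(1-p)^(k-1)` for `k ≥ 1`. -/
def HasGeom {Ω : Type*} [MeasurableSpace Ω] (P : Measure Ω) (X : Ω → ℕ) (p : ℝ) : Prop :=
  ∀ k : ℕ, P {ω | X ω = k} = if k = 0 then 0 else ENNReal.ofReal (p * (1 - p) ^ (k - 1))

/-- In one run of sampling without replacement given by drawing the population
`Fin N` in the order `π 0, π 1, π 2, ...` (where `π` is a permutation of `Fin N`),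
`waitTime S π j` is the number of draws until the `j`-th element of `S` ("success")
appears. -/
noncomputable def waitTime {N : ℕ} (S : Finset (Fin N)) (π : Equiv.Perm (Fin N))
    (j : ℕ) : ℕ :=
  sInf {m | j ≤ (Finset.univ.filter fun i : Fin N => (i : ℕ) < m ∧ π i ∈ S).card}

section Wait
variable {N : ℕ} (S : Finset (Fin N))

/-- number of successes among the first `m` draws -/
def cnt (σ : Equiv.Perm (Fin N)) (m : ℕ) : ℕ :=
  (Finset.univ.filter fun i : Fin N => (i : ℕ) < m ∧ σ i ∈ S).card

lemma cnt_mono (σ : Equiv.Perm (Fin N)) {m m' : ℕ} (h : m ≤ m') : cnt S σ m ≤ cnt S σ m' := by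
  apply Finset.card_le_card
  intro i hi
  simp only [Finset.mem_filter] at *
  exact ⟨hi.1, lt_of_lt_of_le hi.2.1 h, hi.2.2⟩

lemma cnt_zero (σ : Equiv.Perm (Fin N)) : cnt S σ 0 = 0 := by
  simp [cnt]

lemma cnt_of_ge (σ : Equiv.Perm (Fin N)) {m : ℕ} (h : N ≤ m) : cnt S σ m = S.card := by
  unfold cnt
  rw [show (Finset.univ.filter fun i : Fin N => (i : ℕ) < m ∧ σ i ∈ S)
      = Finset.univ.filter fun i : Fin N => σ i ∈ S by
    apply Finset.filter_congr; intro i _; simp [lt_of_lt_of_le i.isLt h]]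
  apply Finset.card_bij (fun i _ => σ i)
  · intro a ha; simpa using (Finset.mem_filter.mp ha).2
  · intro a _ b _ h; exact σ.injective h
  · intro b hb; exact ⟨σ.symm b, by simpa using hb, by simp⟩

lemma cnt_succ (σ : Equiv.Perm (Fin N)) (m : ℕ) (hm : m < N) :
    cnt S σ (m + 1) = cnt S σ m + (if σ ⟨m, hm⟩ ∈ S then 1 else 0) := by
  unfold cnt
  rw [show (Finset.univ.filter fun i : Fin N => (i : ℕ) < m + 1 ∧ σ i ∈ S)
      = (Finset.univ.filter fun i : Fin N => (i : ℕ) < m ∧ σ i ∈ S)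
        ∪ (Finset.univ.filter fun i : Fin N => i = ⟨m, hm⟩ ∧ σ i ∈ S) by
    ext i; simp only [Finset.mem_union, Finset.mem_filter, Finset.mem_univ, true_and]
    constructor
    · rintro ⟨h1, h2⟩
      rcases Nat.lt_succ_iff_lt_or_eq.mp h1 with h | h
      · exact Or.inl ⟨h, h2⟩
      · exact Or.inr ⟨Fin.ext h, h2⟩
    · rintro (⟨h1, h2⟩ | ⟨h1, h2⟩)
      · exact ⟨Nat.lt_succ_of_lt h1, h2⟩
      · exact ⟨by simp [h1], h2⟩]
  rw [Finset.card_union_of_disjoint]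
  · congr 1
    split_ifs with h
    · rw [show (Finset.univ.filter fun i : Fin N => i = ⟨m, hm⟩ ∧ σ i ∈ S) = {⟨m, hm⟩} by
        ext i; simp only [Finset.mem_filter, Finset.mem_univ, true_and, Finset.mem_singleton]
        constructor
        · exact fun h' => h'.1
        · rintro rfl; exact ⟨rfl, h⟩]
      simp
    · rw [show (Finset.univ.filter fun i : Fin N => i = ⟨m, hm⟩ ∧ σ i ∈ S) = ∅ by
        ext i; simp only [Finset.mem_filter, Finset.mem_univ, true_and, Finset.notMem_empty,
          iff_false, not_and]
        rintro rfl; exact h]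
      simp
  · rw [Finset.disjoint_left]
    rintro i hi hi'
    simp only [Finset.mem_filter] at hi hi'
    rw [hi'.2.1] at hi
    exact absurd hi.2.1 (lt_irrefl m)

lemma cnt_succ_le (σ : Equiv.Perm (Fin N)) (m : ℕ) : cnt S σ (m + 1) ≤ cnt S σ m + 1 := by
  by_cases hm : m < N
  · rw [cnt_succ S σ m hm]; split_ifs <;> omega
  · have h1 : cnt S σ (m+1) = S.card := cnt_of_ge S σ (by omega)
    have h2 : cnt S σ m = S.card := cnt_of_ge S σ (by omega)
    omega

lemma cnt_congr {σ τ : Equiv.Perm (Fin N)} (m : ℕ)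
    (h : ∀ i : Fin N, (i : ℕ) < m → σ i = τ i) : cnt S σ m = cnt S τ m := by
  unfold cnt
  congr 1
  apply Finset.filter_congr
  intro i _
  by_cases hi : (i : ℕ) < m
  · simp [hi, h i hi]
  · simp [hi]

lemma waitTime_eq_iff {σ : Equiv.Perm (Fin N)} {j k : ℕ} (hj : j ≤ S.card) :
    waitTime S σ j = k ↔ j ≤ cnt S σ k ∧ ∀ t < k, cnt S σ t < j := by
  have hne : {m | j ≤ cnt S σ m}.Nonempty := ⟨N, by simp [cnt_of_ge S σ le_rfl, hj]⟩
  constructor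
  · intro hk
    subst hk
    refine ⟨Nat.sInf_mem hne, fun t ht => ?_⟩
    have := Nat.notMem_of_lt_sInf (s := {m | j ≤ cnt S σ m}) ht
    simpa using this
  · rintro ⟨h1, h2⟩
    show sInf {m | j ≤ cnt S σ m} = k
    apply le_antisymm (Nat.sInf_le (show k ∈ {m | j ≤ cnt S σ m} from h1))
    by_contra hlt
    push_neg at hlt
    have := Nat.sInf_mem hne
    have h3 : cnt S σ (sInf {m | j ≤ cnt S σ m}) < j := h2 _ hlt
    exact absurd (Set.mem_setOf_eq ▸ this) (by omega)

/-- the permutations with `X_j = k` and no further success in draws `k+1, …, k+i`. -/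
noncomputable def setA (j k i : ℕ) : Finset (Equiv.Perm (Fin N)) :=
  Finset.univ.filter fun σ => waitTime S σ j = k ∧ cnt S σ (k + i) ≤ j

lemma setA_antitone (j k : ℕ) {i i' : ℕ} (h : i ≤ i') : setA S j k i' ⊆ setA S j k i := by
  intro σ hσ
  simp only [setA, Finset.mem_filter, Finset.mem_univ, true_and] at *
  exact ⟨hσ.1, le_trans (cnt_mono S σ (by omega)) hσ.2⟩

lemma card_filter_mem (σ : Equiv.Perm (Fin N)) :
    (Finset.univ.filter fun r : Fin N => σ r ∈ S).card = S.card := by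
  have h : (Finset.univ.filter fun r : Fin N => σ r ∈ S) =
      (Finset.univ.filter fun i : Fin N => (i : ℕ) < N ∧ σ i ∈ S) := by
    apply Finset.filter_congr; intro i _; simp [i.isLt]
  rw [h]
  exact cnt_of_ge S σ le_rfl

lemma setA_succ_mul (j k : ℕ) (hj : 1 ≤ j) (hjS : j + 1 ≤ S.card) (i : ℕ) :
    (setA S j k (i+1)).card * N ≤ (setA S j k i).card * (N - (S.card - j)) := by
  set s := S.card - j with hs
  rcases Finset.eq_empty_or_nonempty (setA S j k (i+1)) with he | ⟨σ₀, hσ₀⟩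
  · simp [he]
  have hjS' : j ≤ S.card := by omega
  have hsN : s ≤ N := le_trans (Nat.sub_le _ _) (by simpa using Finset.card_le_univ S)
  -- k + i < N
  have hq : k + i < N := by
    by_contra h
    push_neg at h
    simp only [setA, Finset.mem_filter, Finset.mem_univ, true_and] at hσ₀
    have h1 : cnt S σ₀ (k + (i+1)) = S.card := cnt_of_ge S σ₀ (by omega)
    omega
  set Q : Fin N := ⟨k + i, hq⟩ with hQ
  -- basic facts about members of setA (i+1)
  have hmem : ∀ σ ∈ setA S j k (i+1),
      (∀ t ≤ k + i + 1, cnt S σ t ≤ j) ∧ j ≤ cnt S σ k ∧ (∀ t < k, cnt S σ t < j)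
        ∧ σ Q ∉ S ∧ cnt S σ (k + i + 1) = j := by
    intro σ hσ
    simp only [setA, Finset.mem_filter, Finset.mem_univ, true_and] at hσ
    obtain ⟨hW, hcnt⟩ := hσ
    rw [waitTime_eq_iff S hjS'] at hW
    have hcnt' : cnt S σ (k + (i+1)) ≤ j := hcnt
    have hle : ∀ t ≤ k + i + 1, cnt S σ t ≤ j := fun t ht =>
      le_trans (cnt_mono S σ (by omega)) hcnt'
    have h1 : cnt S σ (k + i) = j :=
      le_antisymm (hle _ (by omega)) (le_trans hW.1 (cnt_mono S σ (by omega)))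
    have h2 : cnt S σ (k + i + 1) = j :=
      le_antisymm (hle _ le_rfl) (le_trans hW.1 (cnt_mono S σ (by omega)))
    have h3 : σ Q ∉ S := by
      have := cnt_succ S σ (k + i) hq
      rw [h2, h1] at this
      intro hmem'
      simp [hmem'] at this
      exact this hmem'
    exact ⟨hle, hW.1, hW.2, h3, h2⟩
  -- source and target
  set Src : Finset (Σ _ : Equiv.Perm (Fin N), Fin N) :=
    (setA S j k (i+1)).sigma (fun σ =>
      Finset.univ.filter fun r : Fin N => k + i < (r : ℕ) ∧ σ r ∈ S) with hSrc
  set Tgt : Finset (Σ _ : Equiv.Perm (Fin N), Fin N) :=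
    ((setA S j k i).filter fun τ => τ Q ∈ S).sigma (fun τ =>
      Finset.univ.filter fun r : Fin N => k + i < (r : ℕ) ∧ τ r ∉ S) with hTgt
  -- lower bound on Src.card
  have hsrc_card : (setA S j k (i+1)).card * s ≤ Src.card := by
    rw [hSrc, Finset.card_sigma]
    have := Finset.card_nsmul_le_sum (setA S j k (i+1))
      (fun σ => (Finset.univ.filter fun r : Fin N => k + i < (r : ℕ) ∧ σ r ∈ S).card) s ?_
    · simpa [smul_eq_mul, mul_comm] using this
    intro σ hσ
    show s ≤ (Finset.univ.filter fun r : Fin N => k + i < (r : ℕ) ∧ σ r ∈ S).card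
    obtain ⟨hle, _, _, _, h2⟩ := hmem σ hσ
    -- successes split
    have hsplit : (Finset.univ.filter fun r : Fin N => σ r ∈ S) ⊆
        (Finset.univ.filter fun r : Fin N => (r : ℕ) < k + i + 1 ∧ σ r ∈ S)
          ∪ (Finset.univ.filter fun r : Fin N => k + i < (r : ℕ) ∧ σ r ∈ S) := by
      intro r hr
      simp only [Finset.mem_filter, Finset.mem_univ, true_and, Finset.mem_union] at *
      by_cases h : (r : ℕ) < k + i + 1
      · exact Or.inl ⟨h, hr⟩
      · exact Or.inr ⟨by omega, hr⟩
    have := (Finset.card_le_card hsplit).trans (Finset.card_union_le _ _)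
    rw [card_filter_mem S σ] at this
    have hlo : (Finset.univ.filter fun r : Fin N => (r : ℕ) < k + i + 1 ∧ σ r ∈ S).card = j := h2
    omega
  -- upper bound on Tgt.card
  have htgt_card : Tgt.card ≤ ((setA S j k i).filter fun τ => τ Q ∈ S).card * (N - s) := by
    rw [hTgt, Finset.card_sigma]
    have := Finset.sum_le_card_nsmul ((setA S j k i).filter fun τ => τ Q ∈ S)
      (fun τ => (Finset.univ.filter fun r : Fin N => k + i < (r : ℕ) ∧ τ r ∉ S).card) (N - s) ?_
    · simpa [smul_eq_mul] using this
    intro τ _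
    show (Finset.univ.filter fun r : Fin N => k + i < (r : ℕ) ∧ τ r ∉ S).card ≤ N - s
    have hsub : (Finset.univ.filter fun r : Fin N => k + i < (r : ℕ) ∧ τ r ∉ S) ⊆
        Finset.univ.filter fun r : Fin N => τ r ∉ S := by
      intro r hr
      simp only [Finset.mem_filter, Finset.mem_univ, true_and] at *
      exact hr.2
    have hcard := Finset.card_le_card hsub
    have hnot : (Finset.univ.filter fun r : Fin N => τ r ∉ S).card = N - S.card := by
      have h1 := Finset.card_filter_add_card_filter_not
        (s := (Finset.univ : Finset (Fin N))) (p := fun r => τ r ∈ S)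
      rw [card_filter_mem S τ] at h1
      simp only [Finset.card_univ, Fintype.card_fin] at h1
      omega
    rw [hnot] at hcard
    omega
  -- injection
  have hinj : Src.card ≤ Tgt.card := by
    apply Finset.card_le_card_of_injOn (fun x => ⟨x.1 * Equiv.swap Q x.2, x.2⟩)
    · rintro ⟨σ, r⟩ hx
      rw [hSrc, Finset.mem_coe, Finset.mem_sigma] at hx
      obtain ⟨hσ, hr⟩ := hx
      simp only [Finset.mem_filter, Finset.mem_univ, true_and] at hr
      obtain ⟨hrgt, hrS⟩ := hr
      obtain ⟨hle, hj1, hj2, hQS, h2⟩ := hmem σ hσ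
      have hQr : Q ≠ r := by
        intro h
        rw [hQ] at h
        have : (k + i : ℕ) = (r : ℕ) := by rw [← h]
        omega
      set τ := σ * Equiv.swap Q r with hτ
      have happ : ∀ x : Fin N, τ x = σ (Equiv.swap Q r x) := fun x => rfl
      have hagree : ∀ x : Fin N, (x : ℕ) < k + i → τ x = σ x := by
        intro x hx
        rw [happ, Equiv.swap_apply_of_ne_of_ne]
        · intro h; rw [h, hQ] at hx; simp at hx
        · intro h; rw [h] at hx; omega
      have hcnteq : ∀ t ≤ k + i, cnt S τ t = cnt S σ t := by
        intro t ht
        exact cnt_congr S t (fun x hx => hagree x (by omega))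
      rw [hTgt, Finset.mem_coe, Finset.mem_sigma]
      constructor
      · simp only [Finset.mem_filter]
        refine ⟨?_, ?_⟩
        · simp only [setA, Finset.mem_filter, Finset.mem_univ, true_and]
          constructor
          · rw [waitTime_eq_iff S hjS']
            refine ⟨?_, fun t ht => ?_⟩
            · rw [hcnteq k (by omega)]; exact hj1
            · rw [hcnteq t (by omega)]; exact hj2 t ht
          · rw [hcnteq (k + i) le_rfl]
            exact hle _ (by omega)
        · rw [happ, Equiv.swap_apply_left]
          exact hrS
      · simp only [Finset.mem_filter, Finset.mem_univ, true_and]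
        refine ⟨hrgt, ?_⟩
        rw [happ, Equiv.swap_apply_right]
        exact hQS
    · rintro ⟨σ, r⟩ _ ⟨σ', r'⟩ _ h
      simp only [Sigma.mk.inj_iff] at h
      obtain ⟨h1, h2⟩ := h
      have hr : r = r' := eq_of_heq h2
      subst hr
      have : σ = σ' := mul_right_cancel h1
      subst this
      rfl
  -- outer of Tgt is inside setA i \ setA (i+1)
  have houter : ((setA S j k i).filter fun τ => τ Q ∈ S) ⊆
      setA S j k i \ setA S j k (i+1) := by
    intro τ hτ
    simp only [Finset.mem_filter] at hτ
    rw [Finset.mem_sdiff]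
    refine ⟨hτ.1, ?_⟩
    intro hτ'
    obtain ⟨_, _, _, hQS, _⟩ := hmem τ hτ'
    exact hQS hτ.2
  have houtercard : ((setA S j k i).filter fun τ => τ Q ∈ S).card ≤
      (setA S j k i).card - (setA S j k (i+1)).card := by
    have := Finset.card_le_card houter
    rwa [Finset.card_sdiff_of_subset (setA_antitone S j k (by omega))] at this
  -- combine
  have hXY : (setA S j k (i+1)).card ≤ (setA S j k i).card :=
    Finset.card_le_card (setA_antitone S j k (by omega))
  set X := (setA S j k (i+1)).card
  set Y := (setA S j k i).card
  have hkey : X * s ≤ (Y - X) * (N - s) := by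
    calc X * s ≤ Src.card := hsrc_card
    _ ≤ Tgt.card := hinj
    _ ≤ ((setA S j k i).filter fun τ => τ Q ∈ S).card * (N - s) := htgt_card
    _ ≤ (Y - X) * (N - s) := Nat.mul_le_mul_right _ houtercard
  calc X * N = X * s + X * (N - s) := by rw [← Nat.mul_add, Nat.add_sub_cancel' hsN]
  _ ≤ (Y - X) * (N - s) + X * (N - s) := by omega
  _ = ((Y - X) + X) * (N - s) := by ring
  _ = Y * (N - s) := by rw [Nat.sub_add_cancel hXY]

lemma setA_pow (j k : ℕ) (hj : 1 ≤ j) (hjS : j + 1 ≤ S.card) (n : ℕ) :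
    (setA S j k n).card * N ^ n ≤ (setA S j k 0).card * (N - (S.card - j)) ^ n := by
  induction n with
  | zero => simp
  | succ n ih =>
    calc (setA S j k (n+1)).card * N ^ (n+1)
        = ((setA S j k (n+1)).card * N) * N ^ n := by ring
    _ ≤ ((setA S j k n).card * (N - (S.card - j))) * N ^ n :=
        Nat.mul_le_mul_right _ (setA_succ_mul S j k hj hjS n)
    _ = ((setA S j k n).card * N ^ n) * (N - (S.card - j)) := by ring
    _ ≤ ((setA S j k 0).card * (N - (S.card - j)) ^ n) * (N - (S.card - j)) :=
        Nat.mul_le_mul_right _ ih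
    _ = (setA S j k 0).card * (N - (S.card - j)) ^ (n+1) := by ring

end Wait

section Cell
variable {Ω ι : Type*} [MeasurableSpace Ω] [Fintype ι] [DecidableEq ι]
variable (P : Measure Ω) [IsProbabilityMeasure P] (f : Ω → ι) (c : ℝ≥0∞)

lemma cell_c_ne_top (hcard : (Fintype.card ι : ℝ≥0∞) * c = 1) : c ≠ ⊤ := by
  intro h
  rw [h] at hcard
  rcases Nat.eq_zero_or_pos (Fintype.card ι) with h0 | h0
  · rw [h0] at hcard; simp at hcard
  · have hne : ((Fintype.card ι : ℝ≥0∞)) ≠ 0 := by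
      exact_mod_cast h0.ne'
    rw [ENNReal.mul_top hne] at hcard
    exact ENNReal.top_ne_one hcard

lemma cell_apply (hc : ∀ i, P {ω | f ω = i} = c)
    (hcard : (Fintype.card ι : ℝ≥0∞) * c = 1) (E : Finset ι) :
    P {ω | f ω ∈ E} = (E.card : ℝ≥0∞) * c := by
  have hctop := cell_c_ne_top (ι := ι) c hcard
  have hset : ∀ G : Finset ι, {ω | f ω ∈ G} = ⋃ i ∈ G, {ω | f ω = i} := by
    intro G; ext ω; simp
  have hub : ∀ G : Finset ι, P {ω | f ω ∈ G} ≤ (G.card : ℝ≥0∞) * c := by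
    intro G
    rw [hset]
    refine (measure_biUnion_finset_le G _).trans ?_
    simp only [hc, Finset.sum_const, nsmul_eq_mul]
    exact le_rfl
  apply le_antisymm (hub E)
  have hsum : (E.card : ℝ≥0∞) * c + (Eᶜ.card : ℝ≥0∞) * c = 1 := by
    rw [← add_mul, ← Nat.cast_add, Finset.card_add_card_compl, hcard]
  have hcover : (1 : ℝ≥0∞) ≤ P {ω | f ω ∈ E} + (Eᶜ.card : ℝ≥0∞) * c := by
    have h1 : (Set.univ : Set Ω) ⊆ {ω | f ω ∈ E} ∪ {ω | f ω ∈ Eᶜ} := by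
      intro ω _
      by_cases h : f ω ∈ E
      · exact Or.inl h
      · exact Or.inr (by simpa using h)
    calc (1 : ℝ≥0∞) = P Set.univ := (measure_univ).symm
    _ ≤ P ({ω | f ω ∈ E} ∪ {ω | f ω ∈ Eᶜ}) := measure_mono h1
    _ ≤ P {ω | f ω ∈ E} + P {ω | f ω ∈ Eᶜ} := measure_union_le _ _
    _ ≤ P {ω | f ω ∈ E} + (Eᶜ.card : ℝ≥0∞) * c := by gcongr; exact hub Eᶜ
  have : (E.card : ℝ≥0∞) * c = 1 - (Eᶜ.card : ℝ≥0∞) * c :=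
    ENNReal.eq_sub_of_add_eq (by exact ENNReal.mul_ne_top (ENNReal.natCast_ne_top _) hctop) hsum
  rw [this]
  exact tsub_le_iff_right.mpr hcover

lemma cell_cond_le (hc : ∀ i, P {ω | f ω = i} = c)
    (hcard : (Fintype.card ι : ℝ≥0∞) * c = 1) (E F : Finset ι) :
    P[|{ω | f ω ∈ E}] {ω | f ω ∈ F}
      ≤ (((E.card : ℝ≥0∞)) * c)⁻¹ * (((E ∩ F).card : ℝ≥0∞) * c) := by
  have hctop := cell_c_ne_top (ι := ι) c hcard
  set T : ι → Set Ω := fun i => toMeasurable P {ω | f ω = i} with hT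
  have hTm : ∀ i, MeasurableSet (T i) := fun i => measurableSet_toMeasurable _ _
  have hTc : ∀ i, P (T i) = c := fun i => by rw [hT]; rw [measure_toMeasurable]; exact hc i
  have hsubT : ∀ i, {ω | f ω = i} ⊆ T i := fun i => subset_toMeasurable _ _
  -- pairwise intersections are null
  have hpair : ∀ i j : ι, i ≠ j → P (T i ∩ T j) = 0 := by
    intro i j hij
    have hcover : (Set.univ : Set Ω) ⊆ (T i ∪ T j) ∪ ⋃ k ∈ (Finset.univ \ {i, j} : Finset ι), T k := by
      intro ω _
      by_cases h : f ω = i ∨ f ω = j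
      · rcases h with h | h
        · exact Or.inl (Or.inl (hsubT i (h ▸ rfl)))
        · exact Or.inl (Or.inr (hsubT j (h ▸ rfl)))
      · push_neg at h
        refine Or.inr (Set.mem_biUnion ?_ (hsubT (f ω) rfl))
        exact Finset.mem_sdiff.mpr ⟨Finset.mem_univ _, by simp [h.1, h.2]⟩
    have h1 : (1 : ℝ≥0∞) ≤ P (T i ∪ T j) + ((Finset.univ \ {i, j} : Finset ι).card : ℝ≥0∞) * c := by
      calc (1 : ℝ≥0∞) = P Set.univ := (measure_univ).symm
      _ ≤ P ((T i ∪ T j) ∪ ⋃ k ∈ (Finset.univ \ {i, j} : Finset ι), T k) := measure_mono hcover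
      _ ≤ P (T i ∪ T j) + P (⋃ k ∈ (Finset.univ \ {i, j} : Finset ι), T k) := measure_union_le _ _
      _ ≤ P (T i ∪ T j) + ((Finset.univ \ {i, j} : Finset ι).card : ℝ≥0∞) * c := by
          gcongr
          refine (measure_biUnion_finset_le _ _).trans ?_
          simp only [hTc, Finset.sum_const, nsmul_eq_mul]
          exact le_rfl
    have h2 : P (T i ∪ T j) + P (T i ∩ T j) = c + c := by
      rw [measure_union_add_inter (T i) (hTm j), hTc, hTc]
    have hcard2 : ((Finset.univ \ {i, j} : Finset ι).card : ℝ≥0∞) * c + (c + c) = 1 := by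
      have : ({i, j} : Finset ι).card = 2 := Finset.card_pair hij
      rw [Finset.card_sdiff_of_subset (Finset.subset_univ _), this, Finset.card_univ]
      have h4 : (2 : ℕ) ≤ Fintype.card ι := by
        rw [← this]
        exact Finset.card_le_univ _
      rw [← hcard]
      rw [show ((Fintype.card ι - 2 : ℕ) : ℝ≥0∞) = (Fintype.card ι : ℝ≥0∞) - 2 by
        push_cast [h4]
        ring]
      rw [ENNReal.sub_mul (by intro _ _; exact hctop ∘ fun h => h)]
      have h2c : (2 : ℝ≥0∞) * c ≤ (Fintype.card ι : ℝ≥0∞) * c := by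
        gcongr
        exact_mod_cast h4
      rw [two_mul] at h2c ⊢
      exact tsub_add_cancel_of_le h2c
    have h3 : (1 : ℝ≥0∞) + P (T i ∩ T j) ≤ 1 := by
      calc (1 : ℝ≥0∞) + P (T i ∩ T j)
          ≤ (P (T i ∪ T j) + ((Finset.univ \ {i, j} : Finset ι).card : ℝ≥0∞) * c)
            + P (T i ∩ T j) := by gcongr
      _ = ((Finset.univ \ {i, j} : Finset ι).card : ℝ≥0∞) * c + (c + c) := by
          rw [← h2]; ring
      _ = 1 := hcard2
    have h3' : (1 : ℝ≥0∞) + P (T i ∩ T j) ≤ 1 + 0 := by simpa using h3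
    have h5 : P (T i ∩ T j) ≤ 0 := ENNReal.le_of_add_le_add_left ENNReal.one_ne_top h3'
    exact le_antisymm h5 (zero_le)
  -- the null overlap set
  set Z : Set Ω := ⋃ p : ι × ι, if p.1 = p.2 then ∅ else T p.1 ∩ T p.2 with hZ
  have hZm : MeasurableSet Z := by
    apply MeasurableSet.iUnion
    intro p
    split_ifs
    · exact MeasurableSet.empty
    · exact (hTm p.1).inter (hTm p.2)
  have hZ0 : P Z = 0 := by
    apply measure_iUnion_null
    intro p
    split_ifs with h
    · simp
    · exact hpair p.1 p.2 h
  set M : ι → Set Ω := fun i => T i \ Z with hM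
  have hMm : ∀ i, MeasurableSet (M i) := fun i => (hTm i).diff hZm
  have hMc : ∀ i, P (M i) ≤ c := fun i => le_trans (measure_mono Set.diff_subset) (hTc i).le
  have hMdisj : ∀ i j : ι, i ≠ j → M i ∩ {ω | f ω = j} = ∅ := by
    intro i j hij
    apply Set.eq_empty_of_subset_empty
    intro ω hω
    have h1 : ω ∈ T i := hω.1.1
    have h2 : ω ∈ T j := hsubT j hω.2
    have h3 : ω ∈ Z := Set.mem_iUnion.mpr ⟨(i, j), by simp [hij, h1, h2]⟩
    exact hω.1.2 h3
  -- the measurable cover of the event F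
  set B' : Set Ω := Z ∪ ⋃ i ∈ F, M i with hB'
  have hB'm : MeasurableSet B' := hZm.union (F.measurableSet_biUnion (fun i _ => hMm i))
  have hBB' : {ω | f ω ∈ F} ⊆ B' := by
    intro ω hω
    by_cases h : ω ∈ Z
    · exact Or.inl h
    · exact Or.inr (Set.mem_biUnion hω ⟨hsubT (f ω) rfl, h⟩)
  show (P {ω | f ω ∈ E})⁻¹ * (P.restrict {ω | f ω ∈ E}) {ω | f ω ∈ F} ≤ _
  rw [cell_apply P f c hc hcard E]
  gcongr ?_ * ?_
  · exact le_rfl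
  calc (P.restrict {ω | f ω ∈ E}) {ω | f ω ∈ F}
      ≤ (P.restrict {ω | f ω ∈ E}) B' := measure_mono hBB'
  _ = P (B' ∩ {ω | f ω ∈ E}) := Measure.restrict_apply hB'm
  _ ≤ P (Z ∪ ⋃ i ∈ F, (M i ∩ {ω | f ω ∈ E})) := by
      apply measure_mono
      rintro ω ⟨hω1, hω2⟩
      rcases hω1 with h | h
      · exact Or.inl h
      · obtain ⟨i, hi, hωi⟩ := Set.mem_iUnion₂.mp h
        exact Or.inr (Set.mem_biUnion hi ⟨hωi, hω2⟩)
  _ ≤ P Z + ∑ i ∈ F, P (M i ∩ {ω | f ω ∈ E}) :=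
      le_trans (measure_union_le _ _) (by gcongr; exact measure_biUnion_finset_le _ _)
  _ = ∑ i ∈ F, P (M i ∩ {ω | f ω ∈ E}) := by rw [hZ0, zero_add]
  _ ≤ ∑ i ∈ F, (if i ∈ E then c else 0) := by
      apply Finset.sum_le_sum
      intro i _
      split_ifs with h
      · exact le_trans (measure_mono Set.inter_subset_left) (hMc i)
      · have : M i ∩ {ω | f ω ∈ E} = ∅ := by
          apply Set.eq_empty_of_subset_empty
          intro ω hω
          have hfω : f ω ∈ E := hω.2
          have hne : i ≠ f ω := fun he => h (he ▸ hfω)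
          have := hMdisj i (f ω) hne
          exact this ▸ (Set.mem_inter hω.1 rfl)
        rw [this]
        simp
  _ = ∑ i ∈ F ∩ E, c := by rw [Finset.sum_ite_mem]
  _ = ((E ∩ F).card : ℝ≥0∞) * c := by
      rw [Finset.sum_const, nsmul_eq_mul, Finset.inter_comm]

end Cell

lemma geom_tail {Ω' : Type*} [MeasurableSpace Ω'] (Q : Measure Ω') [IsProbabilityMeasure Q]
    (Y : Ω' → ℕ) (p : ℝ) (hp0 : 0 ≤ p) (hp1 : p ≤ 1) (hY : HasGeom Q Y p) (n : ℕ) :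
    ENNReal.ofReal ((1 - p) ^ n) ≤ Q {ω | n + 1 ≤ Y ω} := by
  have hr0 : (0 : ℝ) ≤ 1 - p := by linarith
  have hr1 : (1 : ℝ) - p ≤ 1 := by linarith
  have hrn0 : (0 : ℝ) ≤ (1 - p) ^ n := pow_nonneg hr0 n
  have hrn1 : (1 - p) ^ n ≤ 1 := pow_le_one₀ hr0 hr1
  have hsum : ∑ t ∈ Finset.range (n + 1), Q {ω | Y ω = t}
      = ENNReal.ofReal (1 - (1 - p) ^ n) := by
    rw [Finset.sum_range_succ']
    have h0 : Q {ω | Y ω = 0} = 0 := by simpa using hY 0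
    have ht : ∀ t : ℕ, Q {ω | Y ω = t + 1} = ENNReal.ofReal (p * (1 - p) ^ t) := by
      intro t
      have := hY (t + 1)
      simpa using this
    rw [h0, add_zero]
    simp_rw [ht]
    rw [← ENNReal.ofReal_sum_of_nonneg (fun t _ => mul_nonneg hp0 (pow_nonneg hr0 t))]
    congr 1
    have hg := geom_sum_mul (1 - p) n
    rw [← Finset.mul_sum] at *
    linear_combination -hg
  have hcover : (1 : ℝ≥0∞) ≤ Q {ω | n + 1 ≤ Y ω} + ENNReal.ofReal (1 - (1 - p) ^ n) := by
    rw [← hsum]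
    calc (1 : ℝ≥0∞) = Q Set.univ := measure_univ.symm
    _ ≤ Q ({ω | n + 1 ≤ Y ω} ∪ ⋃ t ∈ Finset.range (n + 1), {ω | Y ω = t}) := by
        apply measure_mono
        intro ω _
        by_cases h : n + 1 ≤ Y ω
        · exact Or.inl h
        · exact Or.inr (Set.mem_biUnion (Finset.mem_range.mpr (by omega)) rfl)
    _ ≤ Q {ω | n + 1 ≤ Y ω} + Q (⋃ t ∈ Finset.range (n + 1), {ω | Y ω = t}) :=
        measure_union_le _ _
    _ ≤ Q {ω | n + 1 ≤ Y ω} + ∑ t ∈ Finset.range (n + 1), Q {ω | Y ω = t} := by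
        gcongr
        exact measure_biUnion_finset_le _ _
  have hco : ENNReal.ofReal ((1 - p) ^ n) + ENNReal.ofReal (1 - (1 - p) ^ n) = 1 := by
    rw [← ENNReal.ofReal_add hrn0 (by linarith)]
    norm_num
  have : ENNReal.ofReal ((1 - p) ^ n) = 1 - ENNReal.ofReal (1 - (1 - p) ^ n) :=
    ENNReal.eq_sub_of_add_eq ENNReal.ofReal_ne_top hco
  rw [this]
  exact tsub_le_iff_right.mpr hcover

/-- Sampling without replacement from a population of size `k₁+k₂`
with `k₁` successes is modeled by a uniformly random permutation `π` of `Fin (k₁+k₂)`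
and a success set `S` of size `k₁`; `X_j = waitTime S π j` is the number of draws until
the `j`-th success. For `1 ≤ j ≤ k₁ - 1`, the conditional law of `X_{j+1} - X_j` given
`X_j = k` is stochastically smaller than `Geo(k₁/(k₁+k₂) - j/(k₁+k₂))`: for every `m`
and every admissible `k`, `P(X_{j+1} - X_j ≥ m | X_j = k) ≤ P(Geo((k₁-j)/(k₁+k₂)) ≥ m)`. -/
theorem negHyperGeom_increment_cond_stochDom_geom
    {Ω Ω' : Type*} [MeasurableSpace Ω] [MeasurableSpace Ω']
    (P : Measure Ω) (Q : Measure Ω') [IsProbabilityMeasure P] [IsProbabilityMeasure Q]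
    (k₁ k₂ : ℕ) (S : Finset (Fin (k₁ + k₂))) (hS : S.card = k₁)
    (π : Ω → Equiv.Perm (Fin (k₁ + k₂)))
    (hunif : ∀ σ : Equiv.Perm (Fin (k₁ + k₂)),
      P {ω | π ω = σ} = 1 / ((Nat.factorial (k₁ + k₂) : ℕ) : ENNReal))
    (j : ℕ) (hj : 1 ≤ j) (hjk : j + 1 ≤ k₁)
    (Y : Ω' → ℕ)
    (hY : HasGeom Q Y (((k₁ : ℝ) - (j : ℝ)) / ((k₁ : ℝ) + (k₂ : ℝ)))) :
    ∀ (m : ℕ) (k : ℕ),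
      (P[|{ω | waitTime S (π ω) j = k}])
          {ω | m ≤ waitTime S (π ω) (j + 1) - waitTime S (π ω) j}
        ≤ Q {ω | m ≤ Y ω} := by
  intro m k
  -- the cell structure
  set c : ℝ≥0∞ := ((Nat.factorial (k₁ + k₂) : ℕ) : ℝ≥0∞)⁻¹ with hc_def
  have hfac0 : ((Nat.factorial (k₁ + k₂) : ℕ) : ℝ≥0∞) ≠ 0 := by
    exact_mod_cast (Nat.factorial_pos (k₁ + k₂)).ne'
  have hfactop : ((Nat.factorial (k₁ + k₂) : ℕ) : ℝ≥0∞) ≠ ⊤ := ENNReal.natCast_ne_top _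
  have hc : ∀ σ : Equiv.Perm (Fin (k₁ + k₂)), P {ω | π ω = σ} = c := by
    intro σ
    rw [hunif σ, one_div]
  have hcard : ((Fintype.card (Equiv.Perm (Fin (k₁ + k₂))) : ℕ) : ℝ≥0∞) * c = 1 := by
    rw [show Fintype.card (Equiv.Perm (Fin (k₁ + k₂))) = Nat.factorial (k₁ + k₂) by
      rw [Fintype.card_perm, Fintype.card_fin]]
    exact ENNReal.mul_inv_cancel hfac0 hfactop
  have hc0 : c ≠ 0 := by simp [hc_def, hfactop]
  have hctop : c ≠ ⊤ := by simp [hc_def, hfac0]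
  -- events as cells
  set E : Finset (Equiv.Perm (Fin (k₁ + k₂))) :=
    Finset.univ.filter (fun σ => waitTime S σ j = k) with hE
  set F : Finset (Equiv.Perm (Fin (k₁ + k₂))) :=
    Finset.univ.filter (fun σ => m ≤ waitTime S σ (j+1) - waitTime S σ j) with hF
  have hEset : {ω | waitTime S (π ω) j = k} = {ω | π ω ∈ E} := by
    ext ω; simp [hE]
  have hFset : {ω | m ≤ waitTime S (π ω) (j + 1) - waitTime S (π ω) j} = {ω | π ω ∈ F} := by
    ext ω; simp [hF]
  rw [hEset, hFset]
  have hcond := cell_cond_le P π c hc hcard E F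
  -- dispatch the case m = 0
  rcases Nat.eq_zero_or_pos m with hm | hm
  · subst hm
    have hQ : Q {ω | 0 ≤ Y ω} = 1 := by
      rw [show {ω | 0 ≤ Y ω} = Set.univ by ext ω; simp]
      exact measure_univ
    rw [hQ]
    show (P {ω | π ω ∈ E})⁻¹ * (P.restrict {ω | π ω ∈ E}) {ω | π ω ∈ F} ≤ 1
    have h1 : (P.restrict {ω | π ω ∈ E}) {ω | π ω ∈ F} ≤ P {ω | π ω ∈ E} := by
      calc (P.restrict {ω | π ω ∈ E}) {ω | π ω ∈ F}
          ≤ (P.restrict {ω | π ω ∈ E}) Set.univ := measure_mono (Set.subset_univ _)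
      _ = P (Set.univ ∩ {ω | π ω ∈ E}) := Measure.restrict_apply MeasurableSet.univ
      _ = P {ω | π ω ∈ E} := by rw [Set.univ_inter]
    rcases eq_or_ne (P {ω | π ω ∈ E}) 0 with h0 | h0
    · rw [h0] at h1
      rw [le_zero_iff.mp h1]
      simp
    · calc (P {ω | π ω ∈ E})⁻¹ * (P.restrict {ω | π ω ∈ E}) {ω | π ω ∈ F}
          ≤ (P {ω | π ω ∈ E})⁻¹ * P {ω | π ω ∈ E} := by gcongr
      _ = 1 := ENNReal.inv_mul_cancel h0 (measure_ne_top P _)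
  -- main case : m = n + 1
  obtain ⟨n, rfl⟩ : ∃ n, m = n + 1 := ⟨m - 1, by omega⟩
  set s := S.card - j with hs
  have hjS' : j ≤ S.card := by omega
  have hjS1 : j + 1 ≤ S.card := by omega
  have hNpos : 0 < (k₁ + k₂) := by omega
  have hsN : s ≤ (k₁ + k₂) := by
    have := Finset.card_le_univ S
    simp only [Finset.card_univ, Fintype.card_fin] at this
    omega
  -- E is setA 0, E ∩ F is inside setA n
  have hEA0 : E = setA S j k 0 := by
    ext σ
    simp only [hE, setA, Finset.mem_filter, Finset.mem_univ, true_and]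
    refine ⟨fun hW => ⟨hW, ?_⟩, fun h => h.1⟩
    rw [waitTime_eq_iff S hjS'] at hW
    rcases Nat.eq_zero_or_pos k with hk | hk
    · exfalso
      have := hW.1
      rw [hk, cnt_zero] at this
      omega
    · obtain ⟨k', rfl⟩ : ∃ k', k = k' + 1 := ⟨k - 1, by omega⟩
      have h1 := cnt_succ_le S σ k'
      have h2 := hW.2 k' (by omega)
      have h3 : cnt S σ (k' + 1) ≤ j := by omega
      simpa using h3
  have hEF : E ∩ F ⊆ setA S j k n := by
    intro σ hσ
    rw [Finset.mem_inter] at hσ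
    simp only [hE, hF, Finset.mem_filter, Finset.mem_univ, true_and] at hσ
    obtain ⟨hW, hm'⟩ := hσ
    simp only [setA, Finset.mem_filter, Finset.mem_univ, true_and]
    refine ⟨hW, ?_⟩
    have hW' : waitTime S σ (j+1) = waitTime S σ (j+1) := rfl
    rw [waitTime_eq_iff S hjS1] at hW'
    have hlt : k + n < waitTime S σ (j + 1) := by
      rw [hW] at hm'
      omega
    have := hW'.2 (k + n) hlt
    omega
  -- the counting estimate
  have hkey : (setA S j k n).card * (k₁ + k₂) ^ n ≤ E.card * ((k₁ + k₂) - s) ^ n := by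
    rw [hEA0]
    exact setA_pow S j k hj hjS1 n
  -- pass to ENNReal
  set a : ℝ≥0∞ := (E.card : ℝ≥0∞) with ha
  set b : ℝ≥0∞ := ((setA S j k n).card : ℝ≥0∞) with hb
  have hchain1 : (P[|{ω | π ω ∈ E}]) {ω | π ω ∈ F} ≤ (a * c)⁻¹ * (b * c) := by
    refine hcond.trans ?_
    gcongr
    rw [hb]
    exact_mod_cast Finset.card_le_card hEF
  have hchain2 : (a * c)⁻¹ * (b * c) ≤ ((((k₁ + k₂) - s : ℕ) : ℝ≥0∞) / (((k₁ + k₂ : ℕ)) : ℝ≥0∞)) ^ n := by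
    rcases Nat.eq_zero_or_pos E.card with hE0 | hE0
    · have hb0 : (setA S j k n).card = 0 := by
        have hsub : setA S j k n ⊆ E := by rw [hEA0]; exact setA_antitone S j k (Nat.zero_le n)
        have := Finset.card_le_card hsub
        omega
      rw [hb, hb0]
      simp
    · have ha0 : a ≠ 0 := by rw [ha]; exact_mod_cast hE0.ne'
      have hatop : a ≠ ⊤ := ENNReal.natCast_ne_top _
      have hNn0 : (((k₁ + k₂ : ℕ)) : ℝ≥0∞) ^ n ≠ 0 := by
        apply pow_ne_zero
        exact_mod_cast hNpos.ne'
      have hNntop : (((k₁ + k₂ : ℕ)) : ℝ≥0∞) ^ n ≠ ⊤ := by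
        apply ENNReal.pow_ne_top
        exact ENNReal.natCast_ne_top _
      have hdp : ((((k₁ + k₂) - s : ℕ)) : ℝ≥0∞) ^ n / (((k₁ + k₂ : ℕ)) : ℝ≥0∞) ^ n
          = (((((k₁ + k₂) - s : ℕ)) : ℝ≥0∞) / (((k₁ + k₂ : ℕ)) : ℝ≥0∞)) ^ n := by
        rw [div_eq_mul_inv, ENNReal.inv_pow, ← mul_pow, ← div_eq_mul_inv]
      have heq : (a * c)⁻¹ * (b * c) = b / a := by
        rw [ENNReal.mul_inv (Or.inl ha0) (Or.inr hc0)]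
        rw [show a⁻¹ * c⁻¹ * (b * c) = (b * a⁻¹) * (c⁻¹ * c) by ring]
        rw [ENNReal.inv_mul_cancel hc0 hctop, mul_one, div_eq_mul_inv]
      have hcomm : ((((k₁ + k₂) - s : ℕ)) : ℝ≥0∞) ^ n / (((k₁ + k₂ : ℕ)) : ℝ≥0∞) ^ n * a
          = ((((k₁ + k₂) - s : ℕ)) : ℝ≥0∞) ^ n * a / (((k₁ + k₂ : ℕ)) : ℝ≥0∞) ^ n := by
        rw [div_eq_mul_inv, div_eq_mul_inv]; ring
      rw [heq, ← hdp, ENNReal.div_le_iff ha0 hatop, hcomm,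
        ENNReal.le_div_iff_mul_le (Or.inl hNn0) (Or.inl hNntop)]
      calc b * (((k₁ + k₂ : ℕ)) : ℝ≥0∞) ^ n = (((setA S j k n).card * (k₁ + k₂) ^ n : ℕ) : ℝ≥0∞) := by push_cast; ring
      _ ≤ ((E.card * ((k₁ + k₂) - s) ^ n : ℕ) : ℝ≥0∞) := by exact_mod_cast hkey
      _ = (((k₁ + k₂) - s : ℕ) : ℝ≥0∞) ^ n * a := by push_cast; ring
  -- identify with the geometric tail
  set preal : ℝ := ((k₁ : ℝ) - (j : ℝ)) / ((k₁ : ℝ) + (k₂ : ℝ)) with hpreal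
  have hNr : ((k₁ : ℝ) + (k₂ : ℝ)) = (((k₁ + k₂ : ℕ)) : ℝ) := by push_cast; ring
  have hNrpos : (0 : ℝ) < (((k₁ + k₂ : ℕ)) : ℝ) := by exact_mod_cast hNpos
  have hp0 : 0 ≤ preal := by
    apply div_nonneg _ (by rw [hNr]; positivity)
    have : (j : ℝ) ≤ (k₁ : ℝ) := by exact_mod_cast (by omega : j ≤ k₁)
    linarith
  have hp1 : preal ≤ 1 := by
    rw [hpreal, div_le_one (by rw [hNr]; positivity)]
    have h1 : (0 : ℝ) ≤ (j : ℝ) := by positivity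
    have h2 : (0 : ℝ) ≤ (k₂ : ℝ) := by positivity
    linarith
  have hsub : (((k₁ + k₂) - s : ℕ) : ℝ) = (((k₁ + k₂ : ℕ)) : ℝ) - (s : ℝ) := by
    rw [Nat.cast_sub hsN]
  have hsr : (s : ℝ) = (k₁ : ℝ) - (j : ℝ) := by
    rw [hs, hS, Nat.cast_sub (by omega : j ≤ k₁)]
  have hone : 1 - preal = (((k₁ + k₂) - s : ℕ) : ℝ) / (((k₁ + k₂ : ℕ)) : ℝ) := by
    have hne : ((k₁ + k₂ : ℕ) : ℝ) ≠ 0 := hNrpos.ne'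
    rw [hsub, hsr, hpreal, hNr, one_sub_div hne]
  have hDeq : ((((k₁ + k₂) - s : ℕ) : ℝ≥0∞) / (((k₁ + k₂ : ℕ)) : ℝ≥0∞)) ^ n = ENNReal.ofReal ((1 - preal) ^ n) := by
    rw [ENNReal.ofReal_pow (by rw [hone]; positivity), hone,
      ENNReal.ofReal_div_of_pos hNrpos, ENNReal.ofReal_natCast, ENNReal.ofReal_natCast]
  calc (P[|{ω | π ω ∈ E}]) {ω | π ω ∈ F}
      ≤ ((((k₁ + k₂) - s : ℕ) : ℝ≥0∞) / (((k₁ + k₂ : ℕ)) : ℝ≥0∞)) ^ n := hchain1.trans hchain2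
  _ = ENNReal.ofReal ((1 - preal) ^ n) := hDeq
  _ ≤ Q {ω | n + 1 ≤ Y ω} := geom_tail Q Y preal hp0 hp1 hY n

end RumorSpreading
end

section
/- Let X_1, ..., X_j and Y_1, ..., Y_j be real-valued random variables, set X_0 ≡ 0, and assume that for each i = 0, ..., j−1 the conditional law of X_{i+1} − X_i given X_i is stochastically smaller than the law of Y_{i+1} (almost surely). Then X_j ≼ Ỹ_1 + ... + Ỹ_j, where Ỹ_1, ..., Ỹ_j are mutually independent random variables with Ỹ_i distributed as Y_i for each i. -/
open MeasureTheory ProbabilityTheory Set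
open scoped ENNReal

namespace RumorSpreading

/-- A measurable upper set of `ℝ` has smaller `μ`-measure than `ν`-measure if the
survival functions are ordered. -/
lemma meas_upperSet_le {μ ν : Measure ℝ} [IsProbabilityMeasure μ] [IsProbabilityMeasure ν]
    (h : ∀ t : ℝ, μ (Ici t) ≤ ν (Ici t)) {U : Set ℝ} (hU : IsUpperSet U) :
    μ U ≤ ν U := by
  have hIoi : ∀ c : ℝ, μ (Ioi c) ≤ ν (Ioi c) := by
    intro c
    have hunion : Ioi c = ⋃ n : ℕ, Ici (c + 1 / (n + 1)) := by
      ext x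
      simp only [mem_Ioi, mem_iUnion, mem_Ici]
      constructor
      · intro hx
        obtain ⟨n, hn⟩ := exists_nat_one_div_lt (sub_pos.2 hx)
        exact ⟨n, by linarith⟩
      · rintro ⟨n, hn⟩
        have : (0:ℝ) < 1 / (n + 1) := by positivity
        linarith
    have hmono : Monotone fun n : ℕ => Ici (c + 1 / ((n:ℝ) + 1)) := by
      intro m n hmn
      refine Ici_subset_Ici.2 (add_le_add_right ?_ _)
      gcongr
    rw [hunion, hmono.directed_le.measure_iUnion,
      hmono.directed_le.measure_iUnion]
    exact iSup_mono fun n => h _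
  rcases eq_empty_or_nonempty U with rfl | hne
  · simp
  by_cases hbdd : BddBelow U
  · have hsub : U ⊆ Ici (sInf U) := fun x hx => csInf_le hbdd hx
    have hsup : Ioi (sInf U) ⊆ U := by
      intro x hx
      obtain ⟨u, hu, hu'⟩ := (csInf_lt_iff hbdd hne).1 hx
      exact hU hu'.le hu
    by_cases hc : sInf U ∈ U
    · have : U = Ici (sInf U) := Subset.antisymm hsub (hU.Ici_subset hc)
      rw [this]; exact h _
    · have : U = Ioi (sInf U) := by
        refine Subset.antisymm (fun x hx => ?_) hsup
        exact lt_of_le_of_ne (csInf_le hbdd hx) (fun hx' => hc (hx' ▸ hx))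
      rw [this]; exact hIoi _
  · have : U = univ := by
      ext x
      simp only [mem_univ, iff_true]
      obtain ⟨u, hu, hux⟩ := not_bddBelow_iff.1 hbdd x
      exact hU hux.le hu
    rw [this]; simp [measure_univ]

/-- Stochastic domination implies comparison of lintegrals of bounded monotone functions. -/
lemma lintegral_mono_of_stochDom {μ ν : Measure ℝ} [IsProbabilityMeasure μ]
    [IsProbabilityMeasure ν] (h : ∀ t : ℝ, μ (Ici t) ≤ ν (Ici t))
    {g : ℝ → ℝ≥0∞} (hg : Monotone g) (hg1 : ∀ x, g x ≤ 1) :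
    ∫⁻ x, g x ∂μ ≤ ∫⁻ x, g x ∂ν := by
  set f : ℝ → ℝ := fun x => (g x).toReal with hf
  have hgx_ne : ∀ x, g x ≠ ⊤ := fun x => ((hg1 x).trans_lt (by norm_num)).ne
  have hgf : ∀ x, g x = ENNReal.ofReal (f x) := fun x =>
    (ENNReal.ofReal_toReal (hgx_ne x)).symm
  have hf_mono : Monotone f := fun a b hab => ENNReal.toReal_mono (hgx_ne b) (hg hab)
  have key : ∀ (m : Measure ℝ),
      ∫⁻ x, g x ∂m = ∫⁻ t in Ioi (0:ℝ), m {a | t ≤ f a} := by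
    intro m
    simp_rw [hgf]
    exact lintegral_eq_lintegral_meas_le m (ae_of_all _ fun x => ENNReal.toReal_nonneg)
      hf_mono.measurable.aemeasurable
  rw [key μ, key ν]
  refine lintegral_mono fun t => ?_
  exact meas_upperSet_le h fun a b hab ha => ha.trans (hf_mono hab)

lemma lintegral_ite_ge {α : Type*} [MeasurableSpace α] (m : Measure α) (f : α → ℝ)
    (hf : Measurable f) (t : ℝ) :
    ∫⁻ ω, (if t ≤ f ω then (1:ℝ≥0∞) else 0) ∂m = m {ω | t ≤ f ω} := by
  have hset : MeasurableSet {ω | t ≤ f ω} := measurableSet_le measurable_const hf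
  calc ∫⁻ ω, (if t ≤ f ω then (1:ℝ≥0∞) else 0) ∂m
      = ∫⁻ ω, Set.indicator {ω | t ≤ f ω} (fun _ => 1) ω ∂m := by
        refine lintegral_congr fun ω => ?_
        by_cases hω : t ≤ f ω <;> simp [hω, Set.indicator_apply]
    _ = m {ω | t ≤ f ω} := lintegral_indicator_one hset

/-- Let `X 0, X 1, ..., X j` and `Y 1, ..., Y j` be real-valued random
variables with `X 0 ≡ 0`, and assume that for each `i = 0, ..., j-1` the (regular)
conditional law of `X (i+1) - X i` given `X i` is stochastically smaller than the law of
`Y (i+1)`, almost surely. Then `X j ≼ Z 1 + ... + Z j` for any mutually independent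
random variables `Z i` with `Z i` distributed as `Y (i+1)`. -/
theorem stochDom_of_cond_increments
    {Ω Ω' : Type*} [MeasurableSpace Ω] [MeasurableSpace Ω']
    (P : Measure Ω) (Q : Measure Ω') [IsProbabilityMeasure P] [IsProbabilityMeasure Q]
    (j : ℕ) (X : ℕ → Ω → ℝ) (Y : ℕ → Ω' → ℝ)
    (hX0 : ∀ ω, X 0 ω = 0)
    (hXm : ∀ i, Measurable (X i)) (hYm : ∀ i, Measurable (Y i))
    (hcond : ∀ i < j, ∀ᵐ x ∂(P.map (X i)), ∀ t : ℝ,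
      (condDistrib (fun ω => X (i + 1) ω - X i ω) (X i) P) x {y | t ≤ y}
        ≤ Q {ω | t ≤ Y (i + 1) ω})
    {Ω'' : Type*} [MeasurableSpace Ω''] (R : Measure Ω'') [IsProbabilityMeasure R]
    (Z : Fin j → Ω'' → ℝ) (hZm : ∀ i, Measurable (Z i))
    (hZindep : iIndepFun Z R)
    (hZlaw : ∀ i : Fin j, R.map (Z i) = Q.map (Y ((i : ℕ) + 1))) :
    ∀ t : ℝ, P {ω | t ≤ X j ω} ≤ R {ω | t ≤ ∑ i : Fin j, Z i ω} := by
  classical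
  -- partial sums of the `Z` variables
  set W : ℕ → Ω'' → ℝ := fun i ω =>
    ∑ k ∈ Finset.univ.filter (fun k : Fin j => (k : ℕ) < i), Z k ω with hW
  have hWm : ∀ i, Measurable (W i) :=
    fun i => Finset.measurable_sum _ fun k _ => hZm k
  -- main induction
  have key : ∀ i, i ≤ j → ∀ g : ℝ → ℝ≥0∞, Monotone g → (∀ x, g x ≤ 1) →
      ∫⁻ ω, g (X i ω) ∂P ≤ ∫⁻ ω, g (W i ω) ∂ R := by
    intro i
    induction i with
    | zero =>
      intro _ g hg hg1
      have h0 : ∀ ω : Ω'', W 0 ω = 0 := by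
        intro ω
        simp [hW]
      simp [hX0, h0, lintegral_const, measure_univ, mul_one]
    | succ i ih =>
      intro hij g hg hg1
      have hi : i < j := Nat.lt_of_succ_le hij
      have ihle := ih (le_of_lt hi)
      have hDm : Measurable (fun ω => X (i+1) ω - X i ω) := (hXm (i+1)).sub (hXm i)
      have hνprob : IsProbabilityMeasure (Q.map (Y (i+1))) :=
        Measure.isProbabilityMeasure_map (hYm (i+1)).aemeasurable
      have hμXprob : IsProbabilityMeasure (P.map (X i)) :=
        Measure.isProbabilityMeasure_map (hXm i).aemeasurable
      have hpairm : Measurable fun ω => (X i ω, X (i+1) ω - X i ω) :=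
        (hXm i).prodMk hDm
      have hjointprob : IsProbabilityMeasure
          (P.map fun ω => (X i ω, X (i+1) ω - X i ω)) :=
        Measure.isProbabilityMeasure_map hpairm.aemeasurable
      have hjoint : (P.map (X i)) ⊗ₘ condDistrib (fun ω => X (i+1) ω - X i ω) (X i) P
          = P.map (fun ω => (X i ω, X (i+1) ω - X i ω)) := by
        rw [condDistrib_def, ← Measure.fst_map_prodMk₀ (X := X i) hDm.aemeasurable]
        exact Measure.disintegrate _ _
      have hF : Measurable fun p : ℝ × ℝ => g (p.1 + p.2) :=
        hg.measurable.comp (measurable_fst.add measurable_snd)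
      set h : ℝ → ℝ≥0∞ := fun x => ∫⁻ d, g (x + d) ∂(Q.map (Y (i+1))) with hh
      have hh_mono : Monotone h := fun a b hab =>
        lintegral_mono fun d => hg (by linarith)
      have hh_le : ∀ x, h x ≤ 1 := fun x =>
        calc ∫⁻ d, g (x + d) ∂(Q.map (Y (i+1))) ≤ ∫⁻ _, 1 ∂(Q.map (Y (i+1))) :=
              lintegral_mono fun d => hg1 _
        _ = 1 := by simp
      have hhm : Measurable h := hh_mono.measurable
      -- left-hand side as a double integral against the conditional kernel
      have e1 : ∫⁻ ω, g (X (i+1) ω) ∂P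
          = ∫⁻ x, ∫⁻ d, g (x + d)
              ∂(condDistrib (fun ω => X (i+1) ω - X i ω) (X i) P x) ∂(P.map (X i)) := by
        have hXsplit : ∀ ω, X (i+1) ω = X i ω + (X (i+1) ω - X i ω) := fun ω => by ring
        calc ∫⁻ ω, g (X (i+1) ω) ∂P
            = ∫⁻ ω, g (X i ω + (X (i+1) ω - X i ω)) ∂P := by
              refine lintegral_congr fun ω => ?_
              rw [← hXsplit ω]
          _ = ∫⁻ p : ℝ × ℝ, g (p.1 + p.2)
                ∂(P.map fun ω => (X i ω, X (i+1) ω - X i ω)) :=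
              (lintegral_map hF hpairm).symm
          _ = ∫⁻ x, ∫⁻ d, g (x + d)
                ∂(condDistrib (fun ω => X (i+1) ω - X i ω) (X i) P x) ∂(P.map (X i)) := by
              rw [← hjoint, Measure.lintegral_compProd hF]
      -- almost-everywhere comparison of the inner integral
      have e2 : ∫⁻ x, ∫⁻ d, g (x + d)
            ∂(condDistrib (fun ω => X (i+1) ω - X i ω) (X i) P x) ∂(P.map (X i))
          ≤ ∫⁻ x, h x ∂(P.map (X i)) := by
        refine lintegral_mono_ae ?_
        filter_upwards [hcond i hi] with x hx
        have hx' : ∀ s : ℝ,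
            (condDistrib (fun ω => X (i+1) ω - X i ω) (X i) P) x (Ici s)
              ≤ (Q.map (Y (i+1))) (Ici s) := by
          intro s
          rw [Measure.map_apply (hYm (i+1)) measurableSet_Ici]
          exact hx s
        exact lintegral_mono_of_stochDom hx'
          (fun a b hab => hg (by linarith)) (fun d => hg1 _)
      have e3 : ∫⁻ x, h x ∂(P.map (X i)) = ∫⁻ ω, h (X i ω) ∂P :=
        lintegral_map hhm (hXm i)
      have e4 : ∫⁻ ω, h (X i ω) ∂P ≤ ∫⁻ ω, h (W i ω) ∂ R := ihle h hh_mono hh_le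
      -- identify the right-hand side
      set e : Fin j := ⟨i, hi⟩ with he
      have henotmem : e ∉ Finset.univ.filter (fun k : Fin j => (k:ℕ) < i) := by
        simp [he]
      have hWsucc : ∀ ω, W (i+1) ω = W i ω + Z e ω := by
        intro ω
        have hins : Finset.univ.filter (fun k : Fin j => (k:ℕ) < i+1)
            = insert e (Finset.univ.filter fun k : Fin j => (k:ℕ) < i) := by
          ext k
          simp only [Finset.mem_filter, Finset.mem_insert, Finset.mem_univ, true_and,
            Nat.lt_succ_iff_lt_or_eq]
          constructor
          · rintro (hk | hk)
            · exact Or.inr hk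
            · exact Or.inl (Fin.ext hk)
          · rintro (rfl | hk)
            · exact Or.inr rfl
            · exact Or.inl hk
        simp only [hW]
        rw [hins, Finset.sum_insert henotmem]
        ring
      have hWeq : W i = ∑ k ∈ Finset.univ.filter (fun k : Fin j => (k:ℕ) < i), Z k := by
        funext ω
        simp [hW, Finset.sum_apply]
      have hindep : IndepFun (W i) (Z e) R := by
        rw [hWeq]
        exact hZindep.indepFun_finsetSum_of_notMem hZm henotmem
      have hmap : R.map (fun ω => (W i ω, Z e ω)) = (R.map (W i)).prod (R.map (Z e)) :=
        (indepFun_iff_map_prod_eq_prod_map_map (hWm i).aemeasurable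
          (hZm e).aemeasurable).1 hindep
      have hZe_law : R.map (Z e) = Q.map (Y (i+1)) := hZlaw e
      have hWiprob : IsProbabilityMeasure (R.map (W i)) :=
        Measure.isProbabilityMeasure_map (hWm i).aemeasurable
      have e5 : ∫⁻ ω, g (W (i+1) ω) ∂ R = ∫⁻ ω, h (W i ω) ∂ R := by
        calc ∫⁻ ω, g (W (i+1) ω) ∂ R
            = ∫⁻ ω, g (W i ω + Z e ω) ∂ R := by
              refine lintegral_congr fun ω => ?_
              rw [hWsucc ω]
          _ = ∫⁻ p : ℝ × ℝ, g (p.1 + p.2) ∂(R.map fun ω => (W i ω, Z e ω)) :=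
              (lintegral_map hF ((hWm i).prodMk (hZm e))).symm
          _ = ∫⁻ x, ∫⁻ d, g (x + d) ∂(R.map (Z e)) ∂(R.map (W i)) := by
              rw [hmap, lintegral_prod _ hF.aemeasurable]
          _ = ∫⁻ x, h x ∂(R.map (W i)) := by rw [hZe_law]
          _ = ∫⁻ ω, h (W i ω) ∂ R := lintegral_map hhm (hWm i)
      calc ∫⁻ ω, g (X (i+1) ω) ∂P
          ≤ ∫⁻ x, h x ∂(P.map (X i)) := e1 ▸ e2
        _ = ∫⁻ ω, h (X i ω) ∂P := e3
        _ ≤ ∫⁻ ω, h (W i ω) ∂ R := e4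
        _ = ∫⁻ ω, g (W (i+1) ω) ∂ R := e5.symm
  -- apply the key claim to the indicator of `Ici t`
  intro t
  set g : ℝ → ℝ≥0∞ := fun x => if t ≤ x then 1 else 0 with hg_def
  have hg_mono : Monotone g := by
    intro a b hab
    by_cases ha : t ≤ a
    · simp [hg_def, ha, ha.trans hab]
    · simp [hg_def, ha]
  have hg_le : ∀ x, g x ≤ 1 := by
    intro x
    by_cases hx : t ≤ x <;> simp [hg_def, hx]
  have hWj : ∀ ω, W j ω = ∑ i : Fin j, Z i ω := by
    intro ω
    simp only [hW]
    congr 1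
    exact Finset.filter_true_of_mem fun k _ => k.isLt
  have hsame : {ω | t ≤ W j ω} = {ω | t ≤ ∑ i : Fin j, Z i ω} := by
    ext ω; simp [hWj ω]
  calc P {ω | t ≤ X j ω} = ∫⁻ ω, g (X j ω) ∂P := (lintegral_ite_ge P (X j) (hXm j) t).symm
    _ ≤ ∫⁻ ω, g (W j ω) ∂ R := key j le_rfl g hg_mono hg_le
    _ = R {ω | t ≤ W j ω} := lintegral_ite_ge R (W j) (hWm j) t
    _ = R {ω | t ≤ ∑ i : Fin j, Z i ω} := by rw [hsame]

end RumorSpreading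
end

section
/- Let p ∈ (0,1] and a ∈ [0,1]. Let A ~ Bernoulli(p) and let I_1, I_2 ~ Bernoulli(a) with A, I_1, I_2 mutually independent, and set S_1 = A·I_1 + A·I_2. Let q = p·a·(1 − a/2) and let B_1, B_2 be independent Bernoulli(q) random variables, S_2 = B_1 + B_2. Then S_2 ≼ S_1, i.e., P(S_2 ≥ 1) ≤ P(S_1 ≥ 1) and P(S_2 ≥ 2) ≤ P(S_1 ≥ 2). -/
open MeasureTheory ProbabilityTheory

namespace RumorSpreading

/-- `X` is a Bernoulli random variable with parameter `p`: it takes the value `1`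
with probability `p` and the value `0` with probability `1 - p`. -/
def HasBernoulli {Ω : Type*} [MeasurableSpace Ω] (P : Measure Ω) (X : Ω → ℕ) (p : ℝ) : Prop :=
  ∀ k : ℕ, P {ω | X ω = k} =
    if k = 0 then ENNReal.ofReal (1 - p) else if k = 1 then ENNReal.ofReal p else 0

lemma two_le_null {Ω : Type*} [MeasurableSpace Ω] (P : Measure Ω) (X : Ω → ℕ) (p : ℝ)
    (h : HasBernoulli P X p) : P {ω | 2 ≤ X ω} = 0 := by
  have hset : {ω | 2 ≤ X ω} = ⋃ k : ℕ, {ω | X ω = k + 2} := by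
    ext ω
    simp only [Set.mem_setOf_eq, Set.mem_iUnion]
    constructor
    · intro hle; exact ⟨X ω - 2, by omega⟩
    · rintro ⟨k, hk⟩; omega
  rw [hset]
  refine le_antisymm ((measure_iUnion_le _).trans ?_) zero_le
  have : ∀ k : ℕ, P {ω | X ω = k + 2} = 0 := by
    intro k
    rw [h (k + 2)]
    simp
  simp [this]

/-- Let `p ∈ (0,1]`, `a ∈ [0,1]`, `A ~ Be(p)`, `I₁, I₂ ~ Be(a)` with
`A, I₁, I₂` mutually independent, and `S₁ = A·I₁ + A·I₂`. Let `q = p·a·(1 - a/2)` and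
`B₁, B₂` independent `Be(q)`, `S₂ = B₁ + B₂`. Then `S₂ ≼ S₁`, i.e.
`P(S₂ ≥ t) ≤ P(S₁ ≥ t)` for all `t` (equivalently `P(S₂ ≥ 1) ≤ P(S₁ ≥ 1)` and
`P(S₂ ≥ 2) ≤ P(S₁ ≥ 2)`). -/
theorem bernoulli_pair_stochDom
    {Ω Ω' : Type*} [MeasurableSpace Ω] [MeasurableSpace Ω']
    (P : Measure Ω) (Q : Measure Ω') [IsProbabilityMeasure P] [IsProbabilityMeasure Q]
    (p a : ℝ) (hp0 : 0 < p) (hp1 : p ≤ 1) (ha0 : 0 ≤ a) (ha1 : a ≤ 1)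
    (A I₁ I₂ : Ω → ℕ)
    (hA : HasBernoulli P A p) (hI₁ : HasBernoulli P I₁ a) (hI₂ : HasBernoulli P I₂ a)
    (hind : ∀ x y z : ℕ,
      P {ω | A ω = x ∧ I₁ ω = y ∧ I₂ ω = z}
        = P {ω | A ω = x} * P {ω | I₁ ω = y} * P {ω | I₂ ω = z})
    (B₁ B₂ : Ω' → ℕ)
    (hB₁ : HasBernoulli Q B₁ (p * a * (1 - a / 2)))
    (hB₂ : HasBernoulli Q B₂ (p * a * (1 - a / 2)))
    (hBind : ∀ x y : ℕ,
      Q {ω | B₁ ω = x ∧ B₂ ω = y} = Q {ω | B₁ ω = x} * Q {ω | B₂ ω = y}) :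
    ∀ t : ℝ,
      Q {ω | t ≤ ((B₁ ω + B₂ ω : ℕ) : ℝ)}
        ≤ P {ω | t ≤ ((A ω * I₁ ω + A ω * I₂ ω : ℕ) : ℝ)} := by
  set q : ℝ := p * a * (1 - a / 2) with hqdef
  have ha2 : (0:ℝ) ≤ 1 - a / 2 := by linarith
  have hq0 : 0 ≤ q := by
    rw [hqdef]; exact mul_nonneg (mul_nonneg hp0.le ha0) ha2
  have hq1 : q ≤ 1 := by
    rw [hqdef]
    have h1 : p * a ≤ 1 := mul_le_one₀ hp1 ha0 ha1
    nlinarith [mul_nonneg hp0.le ha0]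
  have hB₁2 : Q {ω | 2 ≤ B₁ ω} = 0 := two_le_null Q B₁ _ hB₁
  have hB₂2 : Q {ω | 2 ≤ B₂ ω} = 0 := two_le_null Q B₂ _ hB₂
  have hA2 : P {ω | 2 ≤ A ω} = 0 := two_le_null P A _ hA
  -- individual probabilities
  have hB₁0 : Q {ω | B₁ ω = 0} = ENNReal.ofReal (1 - q) := by simpa using hB₁ 0
  have hB₁1 : Q {ω | B₁ ω = 1} = ENNReal.ofReal q := by simpa using hB₁ 1
  have hB₂0 : Q {ω | B₂ ω = 0} = ENNReal.ofReal (1 - q) := by simpa using hB₂ 0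
  have hB₂1 : Q {ω | B₂ ω = 1} = ENNReal.ofReal q := by simpa using hB₂ 1
  intro t
  rcases le_or_gt t 0 with ht0 | ht0
  · have h1 : {ω : Ω' | t ≤ ((B₁ ω + B₂ ω : ℕ) : ℝ)} = Set.univ := by
      ext ω; simp only [Set.mem_setOf_eq, Set.mem_univ, iff_true]
      exact ht0.trans (by positivity)
    have h2 : {ω : Ω | t ≤ ((A ω * I₁ ω + A ω * I₂ ω : ℕ) : ℝ)} = Set.univ := by
      ext ω; simp only [Set.mem_setOf_eq, Set.mem_univ, iff_true]
      exact ht0.trans (by positivity)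
    rw [h1, h2, measure_univ, measure_univ]
  rcases le_or_gt t 1 with ht1 | ht1
  · -- case 0 < t ≤ 1 : events are {S ≥ 1}
    have h1 : {ω : Ω' | t ≤ ((B₁ ω + B₂ ω : ℕ) : ℝ)} = {ω | 1 ≤ B₁ ω + B₂ ω} := by
      ext ω
      simp only [Set.mem_setOf_eq]
      constructor
      · intro h
        have : (0 : ℝ) < ((B₁ ω + B₂ ω : ℕ) : ℝ) := ht0.trans_le h
        have : 0 < B₁ ω + B₂ ω := by exact_mod_cast this
        omega
      · intro h
        refine ht1.trans ?_
        exact_mod_cast h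
    have h2 : {ω : Ω | t ≤ ((A ω * I₁ ω + A ω * I₂ ω : ℕ) : ℝ)}
        = {ω | 1 ≤ A ω * I₁ ω + A ω * I₂ ω} := by
      ext ω
      simp only [Set.mem_setOf_eq]
      constructor
      · intro h
        have : (0 : ℝ) < ((A ω * I₁ ω + A ω * I₂ ω : ℕ) : ℝ) := ht0.trans_le h
        have : 0 < A ω * I₁ ω + A ω * I₂ ω := by exact_mod_cast this
        omega
      · intro h
        refine ht1.trans ?_
        exact_mod_cast h
    rw [h1, h2]
    -- upper bound for Q side
    have hQsub : {ω : Ω' | 1 ≤ B₁ ω + B₂ ω}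
        ⊆ {ω | B₁ ω = 1 ∧ B₂ ω = 0} ∪ {ω | B₁ ω = 0 ∧ B₂ ω = 1}
          ∪ {ω | B₁ ω = 1 ∧ B₂ ω = 1} ∪ {ω | 2 ≤ B₁ ω} ∪ {ω | 2 ≤ B₂ ω} := by
      intro ω hω
      simp only [Set.mem_setOf_eq, Set.mem_union] at *
      omega
    have hQle : Q {ω | 1 ≤ B₁ ω + B₂ ω} ≤ ENNReal.ofReal (2 * q - q ^ 2) := by
      calc Q {ω | 1 ≤ B₁ ω + B₂ ω}
          ≤ Q ({ω | B₁ ω = 1 ∧ B₂ ω = 0} ∪ {ω | B₁ ω = 0 ∧ B₂ ω = 1}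
              ∪ {ω | B₁ ω = 1 ∧ B₂ ω = 1} ∪ {ω | 2 ≤ B₁ ω} ∪ {ω | 2 ≤ B₂ ω}) :=
            measure_mono hQsub
        _ ≤ Q {ω | B₁ ω = 1 ∧ B₂ ω = 0} + Q {ω | B₁ ω = 0 ∧ B₂ ω = 1}
            + Q {ω | B₁ ω = 1 ∧ B₂ ω = 1} + Q {ω | 2 ≤ B₁ ω} + Q {ω | 2 ≤ B₂ ω} := by
            refine (measure_union_le _ _).trans ?_
            gcongr
            refine (measure_union_le _ _).trans ?_
            gcongr
            refine (measure_union_le _ _).trans ?_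
            gcongr
            exact measure_union_le _ _
        _ = ENNReal.ofReal (q * (1 - q)) + ENNReal.ofReal ((1 - q) * q)
            + ENNReal.ofReal (q * q) := by
            rw [hBind 1 0, hBind 0 1, hBind 1 1, hB₁0, hB₁1, hB₂0, hB₂1, hB₁2, hB₂2,
              ← ENNReal.ofReal_mul hq0, ← ENNReal.ofReal_mul (by linarith),
              ← ENNReal.ofReal_mul hq0]
            ring
        _ ≤ ENNReal.ofReal (2 * q - q ^ 2) := by
            rw [← ENNReal.ofReal_add (by nlinarith) (by nlinarith),
              ← ENNReal.ofReal_add (by nlinarith) (by nlinarith)]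
            apply ENNReal.ofReal_le_ofReal
            nlinarith
    -- lower bound for P side
    have hPsub : {ω : Ω | A ω * I₁ ω + A ω * I₂ ω = 0}
        ⊆ {ω | A ω = 0} ∪ {ω | A ω = 1 ∧ I₁ ω = 0 ∧ I₂ ω = 0} ∪ {ω | 2 ≤ A ω} := by
      intro ω hω
      simp only [Set.mem_setOf_eq, Set.mem_union] at *
      rcases Nat.lt_or_ge (A ω) 2 with h | h
      · interval_cases h' : A ω <;> omega
      · omega
    have hP0 : P {ω | A ω * I₁ ω + A ω * I₂ ω = 0}
        ≤ ENNReal.ofReal (1 - p + p * (1 - a) ^ 2) := by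
      calc P {ω | A ω * I₁ ω + A ω * I₂ ω = 0}
          ≤ P {ω | A ω = 0} + P {ω | A ω = 1 ∧ I₁ ω = 0 ∧ I₂ ω = 0} + P {ω | 2 ≤ A ω} := by
            refine (measure_mono hPsub).trans ?_
            refine (measure_union_le _ _).trans ?_
            gcongr
            exact measure_union_le _ _
        _ = ENNReal.ofReal (1 - p) + ENNReal.ofReal (p * ((1 - a) * (1 - a))) := by
            rw [hind 1 0 0, hA2]
            have h1 : P {ω | A ω = 0} = ENNReal.ofReal (1 - p) := by simpa using hA 0
            have h2 : P {ω | A ω = 1} = ENNReal.ofReal p := by simpa using hA 1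
            have h3 : P {ω | I₁ ω = 0} = ENNReal.ofReal (1 - a) := by simpa using hI₁ 0
            have h4 : P {ω | I₂ ω = 0} = ENNReal.ofReal (1 - a) := by simpa using hI₂ 0
            rw [h1, h2, h3, h4, ← ENNReal.ofReal_mul hp0.le,
              ← ENNReal.ofReal_mul (by nlinarith)]
            ring_nf
        _ ≤ ENNReal.ofReal (1 - p + p * (1 - a) ^ 2) := by
            rw [← ENNReal.ofReal_add (by linarith) (by nlinarith)]
            apply ENNReal.ofReal_le_ofReal
            nlinarith
    have hPge : ENNReal.ofReal (2 * q - q ^ 2) ≤ P {ω | 1 ≤ A ω * I₁ ω + A ω * I₂ ω} := by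
      have huniv : (1 : ENNReal)
          ≤ P {ω | 1 ≤ A ω * I₁ ω + A ω * I₂ ω} + P {ω | A ω * I₁ ω + A ω * I₂ ω = 0} := by
        calc (1 : ENNReal) = P Set.univ := (measure_univ).symm
          _ ≤ P ({ω | 1 ≤ A ω * I₁ ω + A ω * I₂ ω} ∪ {ω | A ω * I₁ ω + A ω * I₂ ω = 0}) := by
              refine measure_mono ?_
              intro ω _
              simp only [Set.mem_union, Set.mem_setOf_eq]
              omega
          _ ≤ _ := measure_union_le _ _
      have key : ENNReal.ofReal (2 * q - q ^ 2) + P {ω | A ω * I₁ ω + A ω * I₂ ω = 0}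
          ≤ P {ω | 1 ≤ A ω * I₁ ω + A ω * I₂ ω} + P {ω | A ω * I₁ ω + A ω * I₂ ω = 0} := by
        refine le_trans ?_ huniv
        calc ENNReal.ofReal (2 * q - q ^ 2) + P {ω | A ω * I₁ ω + A ω * I₂ ω = 0}
            ≤ ENNReal.ofReal (2 * q - q ^ 2) + ENNReal.ofReal (1 - p + p * (1 - a) ^ 2) := by
              gcongr
          _ ≤ 1 := by
              rw [← ENNReal.ofReal_add (by nlinarith) (by nlinarith)]
              refine ENNReal.ofReal_le_one.mpr ?_
              have : 1 - p + p * (1 - a) ^ 2 = 1 - 2 * q := by rw [hqdef]; ring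
              nlinarith
      have hfin : P {ω | A ω * I₁ ω + A ω * I₂ ω = 0} ≠ ⊤ :=
        (measure_lt_top P _).ne
      exact ENNReal.add_le_add_iff_right hfin |>.mp key
    exact hQle.trans hPge
  rcases le_or_gt t 2 with ht2 | ht2
  · -- case 1 < t ≤ 2 : events are {S ≥ 2}
    have h1 : {ω : Ω' | t ≤ ((B₁ ω + B₂ ω : ℕ) : ℝ)} = {ω | 2 ≤ B₁ ω + B₂ ω} := by
      ext ω
      simp only [Set.mem_setOf_eq]
      constructor
      · intro h
        have : (1 : ℝ) < ((B₁ ω + B₂ ω : ℕ) : ℝ) := ht1.trans_le h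
        have : 1 < B₁ ω + B₂ ω := by exact_mod_cast this
        omega
      · intro h
        refine ht2.trans ?_
        exact_mod_cast h
    have h2 : {ω : Ω | t ≤ ((A ω * I₁ ω + A ω * I₂ ω : ℕ) : ℝ)}
        = {ω | 2 ≤ A ω * I₁ ω + A ω * I₂ ω} := by
      ext ω
      simp only [Set.mem_setOf_eq]
      constructor
      · intro h
        have : (1 : ℝ) < ((A ω * I₁ ω + A ω * I₂ ω : ℕ) : ℝ) := ht1.trans_le h
        have : 1 < A ω * I₁ ω + A ω * I₂ ω := by exact_mod_cast this
        omega
      · intro h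
        refine ht2.trans ?_
        exact_mod_cast h
    rw [h1, h2]
    have hQle : Q {ω | 2 ≤ B₁ ω + B₂ ω} ≤ ENNReal.ofReal (q * q) := by
      calc Q {ω | 2 ≤ B₁ ω + B₂ ω}
          ≤ Q ({ω | B₁ ω = 1 ∧ B₂ ω = 1} ∪ {ω | 2 ≤ B₁ ω} ∪ {ω | 2 ≤ B₂ ω}) := by
            refine measure_mono ?_
            intro ω hω
            simp only [Set.mem_setOf_eq, Set.mem_union] at *
            omega
        _ ≤ Q {ω | B₁ ω = 1 ∧ B₂ ω = 1} + Q {ω | 2 ≤ B₁ ω} + Q {ω | 2 ≤ B₂ ω} := by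
            refine (measure_union_le _ _).trans ?_
            gcongr
            exact measure_union_le _ _
        _ = ENNReal.ofReal (q * q) := by
            rw [hBind 1 1, hB₁1, hB₂1, hB₁2, hB₂2, ← ENNReal.ofReal_mul hq0]
            simp
    have hPge : ENNReal.ofReal (p * (a * a)) ≤ P {ω | 2 ≤ A ω * I₁ ω + A ω * I₂ ω} := by
      have hsub : {ω : Ω | A ω = 1 ∧ I₁ ω = 1 ∧ I₂ ω = 1} ⊆ {ω | 2 ≤ A ω * I₁ ω + A ω * I₂ ω} := by
        intro ω hω
        simp only [Set.mem_setOf_eq] at *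
        obtain ⟨e1, e2, e3⟩ := hω
        rw [e1, e2, e3]
      have h2' : P {ω | A ω = 1} = ENNReal.ofReal p := by simpa using hA 1
      have h3 : P {ω | I₁ ω = 1} = ENNReal.ofReal a := by simpa using hI₁ 1
      have h4 : P {ω | I₂ ω = 1} = ENNReal.ofReal a := by simpa using hI₂ 1
      calc ENNReal.ofReal (p * (a * a))
          = P {ω | A ω = 1 ∧ I₁ ω = 1 ∧ I₂ ω = 1} := by
            rw [hind 1 1 1, h2', h3, h4, ← ENNReal.ofReal_mul hp0.le,
              ← ENNReal.ofReal_mul (by nlinarith)]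
            ring_nf
        _ ≤ _ := measure_mono hsub
    refine hQle.trans (le_trans ?_ hPge)
    apply ENNReal.ofReal_le_ofReal
    rw [hqdef]
    have hc : (0:ℝ) ≤ 1 - p * ((1 - a / 2) * (1 - a / 2)) := by nlinarith
    nlinarith [mul_nonneg (mul_nonneg hp0.le (mul_nonneg ha0 ha0)) hc]
  · -- case t > 2 : Q side is null
    have hsub : {ω : Ω' | t ≤ ((B₁ ω + B₂ ω : ℕ) : ℝ)} ⊆ {ω | 2 ≤ B₁ ω} ∪ {ω | 2 ≤ B₂ ω} := by
      intro ω hω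
      simp only [Set.mem_setOf_eq, Set.mem_union] at *
      by_contra hc
      push_neg at hc
      have hsum : B₁ ω + B₂ ω ≤ 2 := by omega
      have : ((B₁ ω + B₂ ω : ℕ) : ℝ) ≤ 2 := by exact_mod_cast hsum
      linarith
    calc Q {ω | t ≤ ((B₁ ω + B₂ ω : ℕ) : ℝ)}
        ≤ Q ({ω | 2 ≤ B₁ ω} ∪ {ω | 2 ≤ B₂ ω}) := measure_mono hsub
      _ ≤ Q {ω | 2 ≤ B₁ ω} + Q {ω | 2 ≤ B₂ ω} := measure_union_le _ _
      _ = 0 := by rw [hB₁2, hB₂2]; simp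
      _ ≤ _ := zero_le

end RumorSpreading
end

section
/- Let r ≥ 1, let T ≥ r, d ≥ 1 with T < d, and let J_1, ..., J_r be positive integers with J_1 + ... + J_r ≤ T. For each i, let S_i = G^i_1 + ... + G^i_{J_i} where the G^i_k are independent geometric random variables with G^i_k having parameter 1 − (k−1)/d, all variables across different i being independent. Then S_1 + ... + S_r ≼ G'_1 + ... + G'_T, where G'_1, ..., G'_T are independent geometric random variables each with parameter 1 − T/d. -/
open MeasureTheory ProbabilityTheory
open scoped ENNReal

namespace RumorSpreading

noncomputable def gpmf (p : ℝ) (k : ℕ) : ℝ≥0∞ :=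
  if k = 0 then 0 else ENNReal.ofReal (p * (1 - p) ^ (k - 1))

noncomputable def Sg {ι : Type*} [Fintype ι] (w : ι → ℕ → ℝ≥0∞) (s : ℕ) : ℝ≥0∞ :=
  ∑' f : ι → ℕ, if s ≤ ∑ i, f i then ∏ i, w i (f i) else 0

noncomputable def tail (w : ℕ → ℝ≥0∞) (s : ℕ) : ℝ≥0∞ := ∑' k, if s ≤ k then w k else 0

lemma Sg_reindex {ι κ : Type*} [Fintype ι] [Fintype κ] (e : ι ≃ κ)
    (w : ι → ℕ → ℝ≥0∞) (s : ℕ) : Sg (fun j => w (e.symm j)) s = Sg w s := by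
  unfold Sg
  rw [← Equiv.tsum_eq (Equiv.arrowCongr e.symm (Equiv.refl ℕ))
      (fun f : ι → ℕ => if s ≤ ∑ i, f i then ∏ i, w i (f i) else 0)]
  refine tsum_congr fun g => ?_
  have hfun : ∀ i : ι, (Equiv.arrowCongr e.symm (Equiv.refl ℕ)) g i = g (e i) := by
    intro i; simp [Equiv.arrowCongr]
  simp only [hfun]
  rw [← Equiv.sum_comp e g, ← Equiv.prod_comp e (fun j => w (e.symm j) (g j))]
  simp

lemma Sg_cons {n : ℕ} (w : Fin (n + 1) → ℕ → ℝ≥0∞) (s : ℕ) :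
    Sg w s = ∑' k : ℕ, w 0 k * Sg (fun i : Fin n => w i.succ) (s - k) := by
  set F : ℕ → (Fin n → ℕ) → ℝ≥0∞ :=
    fun k g => w 0 k * (if s - k ≤ ∑ i, g i then ∏ i : Fin n, w i.succ (g i) else 0) with hF
  calc Sg w s
      = ∑' c : ℕ × (Fin n → ℕ),
          (fun f : Fin (n+1) → ℕ => if s ≤ ∑ i, f i then ∏ i, w i (f i) else 0)
          ((Fin.consEquiv (fun _ : Fin (n + 1) => ℕ)) c) :=
        (Equiv.tsum_eq (Fin.consEquiv (fun _ : Fin (n + 1) => ℕ)) _).symm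
    _ = ∑' c : ℕ × (Fin n → ℕ), F c.1 c.2 := by
        refine tsum_congr fun c => ?_
        obtain ⟨k, g⟩ := c
        have hE : ((Fin.consEquiv (fun _ : Fin (n + 1) => ℕ)) (k, g) : Fin (n+1) → ℕ)
            = Fin.cons k g := rfl
        simp only [hE, hF]
        have h1 : ∑ i, Fin.cons (α := fun _ => ℕ) k g i = k + ∑ i, g i := Fin.sum_cons k g
        have h2 : ∏ i, w i (Fin.cons (α := fun _ => ℕ) k g i)
            = w 0 k * ∏ i : Fin n, w i.succ (g i) := by
          rw [Fin.prod_univ_succ]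
          simp
        have h3 : (s ≤ k + ∑ i, g i) ↔ (s - k ≤ ∑ i, g i) := by omega
        simp only [h1, h2]
        rw [if_congr h3 rfl rfl]
        split <;> simp
    _ = ∑' k : ℕ, ∑' g : Fin n → ℕ, F k g := ENNReal.tsum_prod (f := F)
    _ = ∑' k : ℕ, w 0 k * Sg (fun i : Fin n => w i.succ) (s - k) := by
        refine tsum_congr fun k => ?_
        rw [hF]
        rw [ENNReal.tsum_mul_left]
        rfl

lemma Sg_anti {ι : Type*} [Fintype ι] (w : ι → ℕ → ℝ≥0∞) {s s' : ℕ} (h : s ≤ s') :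
    Sg w s' ≤ Sg w s := by
  refine ENNReal.tsum_le_tsum fun f => ?_
  by_cases hc : s' ≤ ∑ i, f i
  · rw [if_pos hc, if_pos (h.trans hc)]
  · simp [hc]

lemma Sg_fin_zero : ∀ (n : ℕ) (w : Fin n → ℕ → ℝ≥0∞), (∀ i, ∑' k, w i k = 1) →
    Sg w 0 = 1 := by
  intro n
  induction n with
  | zero =>
    intro w _
    unfold Sg
    rw [tsum_eq_single (fun _ => 0) (fun f hf => absurd (funext fun i => i.elim0) hf)]
    simp
  | succ n ih =>
    intro w hw
    rw [Sg_cons]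
    simp only [Nat.zero_sub, ih (fun i : Fin n => w i.succ) (fun i => hw i.succ), mul_one]
    exact hw 0

lemma Sg_le_one {ι : Type*} [Fintype ι] (w : ι → ℕ → ℝ≥0∞)
    (hw : ∀ i, ∑' k, w i k = 1) (s : ℕ) : Sg w s ≤ 1 := by
  have e := Fintype.equivFin ι
  calc Sg w s ≤ Sg w 0 := Sg_anti w (Nat.zero_le s)
  _ = Sg (fun j => w (e.symm j)) 0 := (Sg_reindex e w 0).symm
  _ = 1 := Sg_fin_zero _ _ (fun i => hw _)


/-- key expectation identity for monotone bounded φ -/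
lemma key_identity (u : ℕ → ℝ≥0∞) (φ : ℕ → ℝ≥0∞) (hφ : Monotone φ)
    (hu : ∑' k, u k = 1) :
    ∑' k, u k * φ k = φ 0 + ∑' j, (φ (j + 1) - φ j) * tail u (j + 1) := by
  set Δ : ℕ → ℝ≥0∞ := fun j => φ (j + 1) - φ j with hΔ
  have hdecomp : ∀ k, φ k = φ 0 + ∑ j ∈ Finset.range k, Δ j := by
    intro k
    induction k with
    | zero => simp
    | succ k ih =>
      rw [Finset.sum_range_succ, ← add_assoc, ← ih, hΔ]
      exact (add_tsub_cancel_of_le (hφ (Nat.le_succ k))).symm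
  calc ∑' k, u k * φ k
      = ∑' k, (u k * φ 0 + u k * ∑ j ∈ Finset.range k, Δ j) := by
        refine tsum_congr fun k => ?_
        rw [← mul_add, ← hdecomp]
    _ = φ 0 * ∑' k, u k + ∑' k, u k * ∑ j ∈ Finset.range k, Δ j := by
        rw [ENNReal.tsum_add]
        congr 1
        exact ENNReal.tsum_mul_right.trans (mul_comm _ _)
    _ = φ 0 + ∑' j, (φ (j + 1) - φ j) * tail u (j + 1) := by
        rw [hu, mul_one]
        congr 1
        calc ∑' k, u k * ∑ j ∈ Finset.range k, Δ j
            = ∑' k, ∑' j, (if j + 1 ≤ k then u k * Δ j else 0) := by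
              refine tsum_congr fun k => ?_
              have : ∑ j ∈ Finset.range k, Δ j = ∑' j, if j + 1 ≤ k then Δ j else 0 := by
                rw [tsum_eq_sum (s := Finset.range k)
                  (fun j hj => by rw [if_neg (by simpa using fun h : j + 1 ≤ k => hj (Finset.mem_range.2 h))])]
                exact (Finset.sum_congr rfl fun j hj => by
                  rw [if_pos (Nat.succ_le_of_lt (Finset.mem_range.1 hj))]).symm
              rw [this, ← ENNReal.tsum_mul_left]
              exact tsum_congr fun j => by split <;> simp
          _ = ∑' j, ∑' k, (if j + 1 ≤ k then u k * Δ j else 0) := ENNReal.tsum_comm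
          _ = ∑' j, Δ j * tail u (j + 1) := by
              refine tsum_congr fun j => ?_
              unfold tail
              rw [← ENNReal.tsum_mul_left]
              refine tsum_congr fun k => ?_
              split <;> simp [mul_comm]

lemma dom_step (u v : ℕ → ℝ≥0∞) (hu : ∑' k, u k = 1) (hv : ∑' k, v k = 1)
    (hdom : ∀ m, tail u m ≤ tail v m)
    (φ : ℕ → ℝ≥0∞) (hφ : Monotone φ) :
    ∑' k, u k * φ k ≤ ∑' k, v k * φ k := by
  rw [key_identity u φ hφ hu, key_identity v φ hφ hv]
  refine add_le_add_right (ENNReal.tsum_le_tsum fun j => ?_) _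
  exact mul_le_mul_right (hdom (j + 1)) _


lemma Sg_mono_params : ∀ (n : ℕ) (w v : Fin n → ℕ → ℝ≥0∞),
    (∀ i, ∑' k, w i k = 1) → (∀ i, ∑' k, v i k = 1) →
    (∀ i m, tail (w i) m ≤ tail (v i) m) → ∀ s, Sg w s ≤ Sg v s := by
  intro n
  induction n with
  | zero => intro w v _ _ _ s; exact le_of_eq rfl
  | succ n ih =>
    intro w v hw hv hdom s
    rw [Sg_cons, Sg_cons]
    calc ∑' k, w 0 k * Sg (fun i : Fin n => w i.succ) (s - k)
        ≤ ∑' k, w 0 k * Sg (fun i : Fin n => v i.succ) (s - k) :=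
          ENNReal.tsum_le_tsum fun k => mul_le_mul_right
            (ih _ _ (fun i => hw i.succ) (fun i => hv i.succ)
              (fun i m => hdom i.succ m) (s - k)) _
      _ ≤ ∑' k, v 0 k * Sg (fun i : Fin n => v i.succ) (s - k) := by
          refine dom_step (w 0) (v 0) (hw 0) (hv 0) (fun m => hdom 0 m)
            (fun k => Sg (fun i : Fin n => v i.succ) (s - k)) ?_
          intro k k' hk
          exact Sg_anti _ (Nat.sub_le_sub_left hk s)

lemma Sg_pad (u : ℕ → ℝ≥0∞) (hu : ∑' k, u k = 1) :
    ∀ (n m : ℕ), n ≤ m → ∀ s, Sg (fun _ : Fin n => u) s ≤ Sg (fun _ : Fin m => u) s := by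
  intro n m hnm
  induction m, hnm using Nat.le_induction with
  | base => intro s; exact le_of_eq rfl
  | succ m hnm ih =>
    intro s
    refine (ih s).trans ?_
    rw [Sg_cons (fun _ : Fin (m+1) => u) s]
    calc Sg (fun _ : Fin m => u) s
        = ∑' k, u k * Sg (fun _ : Fin m => u) s := by
          rw [ENNReal.tsum_mul_right, hu, one_mul]
      _ ≤ ∑' k, u k * Sg (fun _ : Fin m => u) (s - k) :=
          ENNReal.tsum_le_tsum fun k =>
            mul_le_mul_right (Sg_anti _ (Nat.sub_le s k)) _


lemma gpmf_eq {p : ℝ} (hp0 : 0 < p) (hp1 : p ≤ 1) (k : ℕ) :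
    gpmf p k = if k = 0 then 0 else ENNReal.ofReal p * ENNReal.ofReal (1 - p) ^ (k - 1) := by
  unfold gpmf
  split
  · rfl
  · rw [ENNReal.ofReal_mul hp0.le, ENNReal.ofReal_pow (by linarith)]

lemma tail_shift (w : ℕ → ℝ≥0∞) (s : ℕ) : tail w s = ∑' j, w (j + s) := by
  unfold tail
  rw [← Function.Injective.tsum_eq (f := fun k => if s ≤ k then w k else 0)
    (g := fun j : ℕ => j + s) (add_left_injective s) ?_]
  · exact tsum_congr fun j => if_pos (Nat.le_add_left s j)
  · intro k hk
    rcases le_or_gt s k with h | h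
    · exact ⟨k - s, by simp; omega⟩
    · simp only [Function.mem_support, if_neg (not_le.2 h)] at hk
      exact absurd rfl hk

lemma tail_gpmf_succ {p : ℝ} (hp0 : 0 < p) (hp1 : p ≤ 1) (s : ℕ) :
    tail (gpmf p) (s + 1) = ENNReal.ofReal (1 - p) ^ s := by
  rw [tail_shift]
  have h1p : (0:ℝ) ≤ 1 - p := by linarith
  have : ∀ j : ℕ, gpmf p (j + (s + 1))
      = ENNReal.ofReal p * ENNReal.ofReal (1 - p) ^ s * ENNReal.ofReal (1 - p) ^ j := by
    intro j
    rw [gpmf_eq hp0 hp1, if_neg (by omega)]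
    have : j + (s + 1) - 1 = s + j := by omega
    rw [this, pow_add]
    ring
  rw [tsum_congr this, ENNReal.tsum_mul_left, ENNReal.tsum_geometric]
  have hlt : ENNReal.ofReal (1 - p) < 1 := by
    rw [← ENNReal.ofReal_one]
    exact ENNReal.ofReal_lt_ofReal_iff_of_nonneg h1p |>.2 (by linarith)
  have hsub : (1 : ℝ≥0∞) - ENNReal.ofReal (1 - p) = ENNReal.ofReal p := by
    rw [← ENNReal.ofReal_one, ← ENNReal.ofReal_sub _ h1p]
    norm_num
  rw [hsub, mul_assoc, mul_comm (ENNReal.ofReal (1-p) ^ s), ← mul_assoc,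
    ENNReal.mul_inv_cancel (by simpa using hp0) ENNReal.ofReal_ne_top, one_mul]

lemma tail_gpmf_zero {p : ℝ} (hp0 : 0 < p) (hp1 : p ≤ 1) :
    tail (gpmf p) 0 = 1 := by
  have : tail (gpmf p) 0 = tail (gpmf p) 1 := by
    unfold tail
    refine tsum_congr fun k => ?_
    match k with
    | 0 => simp [gpmf]
    | k + 1 => simp
  rw [this, tail_gpmf_succ hp0 hp1, pow_zero]

lemma gpmf_total {p : ℝ} (hp0 : 0 < p) (hp1 : p ≤ 1) : ∑' k, gpmf p k = 1 := by
  have := tail_gpmf_zero hp0 hp1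
  unfold tail at this
  rwa [tsum_congr (fun k => if_pos (Nat.zero_le k))] at this

lemma tail_gpmf_mono {p q : ℝ} (hq0 : 0 < q) (hqp : q ≤ p) (hp1 : p ≤ 1) (m : ℕ) :
    tail (gpmf p) m ≤ tail (gpmf q) m := by
  match m with
  | 0 => rw [tail_gpmf_zero (lt_of_lt_of_le hq0 hqp) hp1, tail_gpmf_zero hq0 (hqp.trans hp1)]
  | s + 1 =>
    rw [tail_gpmf_succ (lt_of_lt_of_le hq0 hqp) hp1, tail_gpmf_succ hq0 (hqp.trans hp1)]
    exact pow_le_pow_left' (ENNReal.ofReal_le_ofReal (by linarith)) s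


lemma measure_le_tsum {Ω : Type*} [MeasurableSpace Ω] (P : Measure Ω)
    {ι : Type*} [Fintype ι] (X : ι → Ω → ℕ) (s : ℕ) :
    P {ω | s ≤ ∑ i, X i ω} ≤
      ∑' f : ι → ℕ, if s ≤ ∑ i, f i then P {ω | ∀ i, X i ω = f i} else 0 := by
  have hsub : {ω | s ≤ ∑ i, X i ω} ⊆
      ⋃ f : ι → ℕ, (if s ≤ ∑ i, f i then {ω | ∀ i, X i ω = f i} else ∅) := by
    intro ω hω
    refine Set.mem_iUnion.2 ⟨fun i => X i ω, ?_⟩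
    simp only [if_pos (show s ≤ ∑ i, (fun i => X i ω) i from hω)]
    exact fun i => rfl
  refine (measure_mono hsub).trans ((measure_iUnion_le _).trans ?_)
  refine ENNReal.tsum_le_tsum fun f => ?_
  split <;> simp

lemma tsum_le_measure {Ω : Type*} [MeasurableSpace Ω] (P : Measure Ω)
    [IsProbabilityMeasure P]
    {ι : Type*} [Fintype ι] (X : ι → Ω → ℕ) (s : ℕ)
    (htot : ∑' f : ι → ℕ, P {ω | ∀ i, X i ω = f i} = 1) :
    (∑' f : ι → ℕ, if s ≤ ∑ i, f i then P {ω | ∀ i, X i ω = f i} else 0) ≤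
      P {ω | s ≤ ∑ i, X i ω} := by
  set μB : (ι → ℕ) → ℝ≥0∞ := fun f => P {ω | ∀ i, X i ω = f i} with hμB
  set a : ℝ≥0∞ := ∑' f : ι → ℕ, if ¬ s ≤ ∑ i, f i then μB f else 0 with ha
  set b : ℝ≥0∞ := ∑' f : ι → ℕ, if s ≤ ∑ i, f i then μB f else 0 with hb
  have hab : b + a = 1 := by
    rw [hb, ha, ← ENNReal.tsum_add, ← htot]
    refine tsum_congr fun f => ?_
    by_cases h : s ≤ ∑ i, f i <;> simp [h, hμB]
  have hcompl : P {ω | ¬ s ≤ ∑ i, X i ω} ≤ a := by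
    have hsub : {ω | ¬ s ≤ ∑ i, X i ω} ⊆
        ⋃ f : ι → ℕ, (if ¬ s ≤ ∑ i, f i then {ω | ∀ i, X i ω = f i} else ∅) := by
      intro ω hω
      refine Set.mem_iUnion.2 ⟨fun i => X i ω, ?_⟩
      simp only [if_pos (show ¬ s ≤ ∑ i, (fun i => X i ω) i from hω)]
      exact fun i => rfl
    refine (measure_mono hsub).trans ((measure_iUnion_le _).trans ?_)
    refine ENNReal.tsum_le_tsum fun f => ?_
    split <;> simp [hμB]
  have hunion : (1 : ℝ≥0∞) ≤ P {ω | s ≤ ∑ i, X i ω} + P {ω | ¬ s ≤ ∑ i, X i ω} := by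
    have : ({ω | s ≤ ∑ i, X i ω} ∪ {ω | ¬ s ≤ ∑ i, X i ω}) = Set.univ := by
      ext ω; by_cases h : s ≤ ∑ i, X i ω <;> simp [h]
      omega
    calc (1 : ℝ≥0∞) = P Set.univ := (measure_univ).symm
      _ = P ({ω | s ≤ ∑ i, X i ω} ∪ {ω | ¬ s ≤ ∑ i, X i ω}) := by rw [this]
      _ ≤ _ := measure_union_le _ _
  have ha1 : a ≤ 1 := by rw [← hab]; exact le_add_self
  have hbeq : b = 1 - a := ENNReal.eq_sub_of_add_eq (ha1.trans_lt ENNReal.one_lt_top).ne hab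
  rw [hbeq]
  rw [tsub_le_iff_right]
  exact hunion.trans (add_le_add_right hcompl _)


/-- Let `r ≥ 1`, `r ≤ T < d`, `1 ≤ d`, and let `J 1, ..., J r` be
positive integers with `J 1 + ... + J r ≤ T`. For each `i` let
`S i = G i 1 + ... + G i (J i)` where the `G i k` are mutually independent geometric
random variables (over all pairs `(i,k)`), `G i k` with parameter `1 - (k-1)/d`
(indexed here by `k : Fin (J i)`, with parameter `1 - k/d`). Then
`S 1 + ... + S r ≼ G' 1 + ... + G' T` where the `G' m` are mutually independent
geometric random variables, each with parameter `1 - T/d`. -/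
theorem sum_partial_geom_stochDom
    {Ω Ω' : Type*} [MeasurableSpace Ω] [MeasurableSpace Ω']
    (P : Measure Ω) (Q : Measure Ω') [IsProbabilityMeasure P] [IsProbabilityMeasure Q]
    (r T d : ℕ) (hr : 1 ≤ r) (hrT : r ≤ T) (hd : 1 ≤ d) (hTd : T < d)
    (J : Fin r → ℕ) (hJ : ∀ i, 1 ≤ J i) (hJT : ∑ i, J i ≤ T)
    (G : (Σ i : Fin r, Fin (J i)) → Ω → ℕ)
    (hG : ∀ a : Σ i : Fin r, Fin (J i),
      HasGeom P (G a) (1 - ((a.2 : ℕ) : ℝ) / (d : ℝ)))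
    (hGindep : ∀ f : (Σ i : Fin r, Fin (J i)) → ℕ,
      P {ω | ∀ a, G a ω = f a} = ∏ a, P {ω | G a ω = f a})
    (G' : Fin T → Ω' → ℕ)
    (hG' : ∀ m, HasGeom Q (G' m) (1 - (T : ℝ) / (d : ℝ)))
    (hG'indep : ∀ f : Fin T → ℕ,
      Q {ω | ∀ m, G' m ω = f m} = ∏ m, Q {ω | G' m ω = f m}) :
    ∀ t : ℝ,
      P {ω | t ≤ ((∑ a, G a ω : ℕ) : ℝ)} ≤ Q {ω | t ≤ ((∑ m, G' m ω : ℕ) : ℝ)} := by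
  intro t
  set s : ℕ := ⌈t⌉₊ with hs
  have hd0 : (0:ℝ) < d := by exact_mod_cast Nat.pos_of_ne_zero (by omega)
  set q : ℝ := 1 - (T:ℝ)/(d:ℝ) with hqdef
  have hq0 : 0 < q := by
    have : (T:ℝ)/(d:ℝ) < 1 := (div_lt_one hd0).2 (by exact_mod_cast hTd)
    simp [hqdef]; linarith
  have hq1 : q ≤ 1 := by
    have : (0:ℝ) ≤ (T:ℝ)/(d:ℝ) := by positivity
    simp [hqdef]; linarith
  -- facts about the parameters p a
  have hpa : ∀ a : Σ i : Fin r, Fin (J i),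
      q ≤ 1 - ((a.2 : ℕ) : ℝ) / (d : ℝ) ∧ 1 - ((a.2 : ℕ) : ℝ) / (d : ℝ) ≤ 1 := by
    intro a
    have hk : (a.2 : ℕ) ≤ T := by
      have h1 : (a.2 : ℕ) < J a.1 := a.2.isLt
      have h2 : J a.1 ≤ ∑ i, J i :=
        Finset.single_le_sum (fun i _ => Nat.zero_le (J i)) (Finset.mem_univ a.1)
      omega
    constructor
    · have : ((a.2 : ℕ) : ℝ) / (d:ℝ) ≤ (T:ℝ)/(d:ℝ) := by
        have hk' : ((a.2 : ℕ) : ℝ) ≤ (T : ℝ) := by exact_mod_cast hk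
        gcongr
      simp [hqdef]; linarith
    · have : (0:ℝ) ≤ ((a.2 : ℕ) : ℝ) / (d:ℝ) := by positivity
      linarith
  have hpa0 : ∀ a : Σ i : Fin r, Fin (J i), 0 < 1 - ((a.2 : ℕ) : ℝ) / (d : ℝ) :=
    fun a => lt_of_lt_of_le hq0 (hpa a).1
  set wP : (Σ i : Fin r, Fin (J i)) → ℕ → ℝ≥0∞ :=
    fun a => gpmf (1 - ((a.2 : ℕ) : ℝ) / (d : ℝ)) with hwP
  set wq : ℕ → ℝ≥0∞ := gpmf q with hwq
  have hwPtot : ∀ a, ∑' k, wP a k = 1 := fun a => gpmf_total (hpa0 a) (hpa a).2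
  have hwqtot : ∑' k, wq k = 1 := gpmf_total hq0 hq1
  -- rewrite the sets
  have hsetP : {ω | t ≤ ((∑ a, G a ω : ℕ) : ℝ)} = {ω | s ≤ ∑ a, G a ω} := by
    ext ω; simp only [Set.mem_setOf_eq, hs, Nat.ceil_le]
  have hsetQ : {ω | t ≤ ((∑ m, G' m ω : ℕ) : ℝ)} = {ω | s ≤ ∑ m, G' m ω} := by
    ext ω; simp only [Set.mem_setOf_eq, hs, Nat.ceil_le]
  rw [hsetP, hsetQ]
  -- pmf identities
  have hPA : ∀ f : (Σ i : Fin r, Fin (J i)) → ℕ,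
      P {ω | ∀ a, G a ω = f a} = ∏ a, wP a (f a) := by
    intro f
    rw [hGindep f]
    exact Finset.prod_congr rfl fun a _ => hG a (f a)
  have hQB : ∀ f : Fin T → ℕ,
      Q {ω | ∀ m, G' m ω = f m} = ∏ m, wq (f m) := by
    intro f
    rw [hG'indep f]
    exact Finset.prod_congr rfl fun m _ => hG' m (f m)
  -- step 1
  have step1 : P {ω | s ≤ ∑ a, G a ω} ≤ Sg wP s := by
    refine (measure_le_tsum P G s).trans (le_of_eq ?_)
    exact tsum_congr fun f => by rw [hPA f]
  -- step 2 : transport to Fin N and compare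
  set N := Fintype.card (Σ i : Fin r, Fin (J i)) with hN
  have hNT : N ≤ T := by
    have : N = ∑ i, J i := by simp [hN, Fintype.card_sigma]
    omega
  have e := Fintype.equivFin (Σ i : Fin r, Fin (J i))
  have step2 : Sg wP s ≤ Sg (fun _ : Fin N => wq) s := by
    rw [← Sg_reindex e wP s]
    refine Sg_mono_params N _ _ (fun j => hwPtot (e.symm j)) (fun _ => hwqtot) ?_ s
    intro j m
    exact tail_gpmf_mono hq0 (hpa (e.symm j)).1 (hpa (e.symm j)).2 m
  have step3 : Sg (fun _ : Fin N => wq) s ≤ Sg (fun _ : Fin T => wq) s :=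
    Sg_pad wq hwqtot N T hNT s
  -- step 4
  have htot : ∑' f : Fin T → ℕ, Q {ω | ∀ m, G' m ω = f m} = 1 := by
    have h0 : Sg (fun _ : Fin T => wq) 0 = 1 := Sg_fin_zero T _ (fun _ => hwqtot)
    rw [← h0]
    unfold Sg
    refine tsum_congr fun f => ?_
    rw [hQB f, if_pos (Nat.zero_le _)]
  have step4 : Sg (fun _ : Fin T => wq) s ≤ Q {ω | s ≤ ∑ m, G' m ω} := by
    refine le_trans (le_of_eq ?_) (tsum_le_measure Q G' s htot)
    exact tsum_congr fun f => by rw [hQB f]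
  exact step1.trans (step2.trans (step3.trans step4))

end RumorSpreading
end
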